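/- Epsilon contraction formula: for the q-antisymmetrizer W on N letters and the q-epsilon tensors, Σ_{l_{k+1},...,l_N} ε_q^{i_1...i_k l_{k+1}...l_N} · ε_{q^{-1}}_{j_1...j_k l_{k+1}...l_N} = (N−k)! · W^{i_1...i_k}_{j_1...j_k}. -/

import Mathlib

set_option maxHeartbeats 1000000


/-- `Λ` acting at positions `t, t+1` of `(ℂ^N)^{⊗k}` (identity if `t+1 ≥ k`):
built from `Λ^{ab}_{cd} = q(a,b) δ^a_d δ^b_c`, it maps `e_g` to
`q(g t, g (t+1)) e_{g ∘ swap(t,t+1)}`. -/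
def lamPos {N : ℕ} (q : Fin N → Fin N → ℂ) (k t : ℕ) :
    Matrix (Fin k → Fin N) (Fin k → Fin N) ℂ :=
  if h : t + 1 < k then
    fun f g =>
      if g = f ∘ (Equiv.swap (⟨t, Nat.lt_of_succ_lt h⟩ : Fin k) ⟨t + 1, h⟩)
      then q (f ⟨t, Nat.lt_of_succ_lt h⟩) (f ⟨t + 1, h⟩) else 0
  else 1

/-- The operators `𝓘_{1...m}` of the q-antisymmetrizer recursion:
`𝓘_{1} = I`, `𝓘_{1...m} = I − 𝓘_{1...m−1} Λ_{m−1,m}`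
(in 0-based positions `Λ_{m−1,m} = lamPos q k (m−2)`), realized as matrices on
`(ℂ^N)^{⊗k}`. -/
noncomputable def Ical {N : ℕ} (q : Fin N → Fin N → ℂ) (k : ℕ) :
    ℕ → Matrix (Fin k → Fin N) (Fin k → Fin N) ℂ
  | 0 => 1
  | 1 => 1
  | (m + 2) => 1 - Ical q k (m + 1) * lamPos q k m

/-- The q-antisymmetrizer `W_{1...m}` defined by the recursion
`W_{1...m} = 𝓘_{1...m} W_{1...m−1}`, `W_1 = I`. -/
noncomputable def Wmat {N : ℕ} (q : Fin N → Fin N → ℂ) (k : ℕ) :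
    ℕ → Matrix (Fin k → Fin N) (Fin k → Fin N) ℂ
  | 0 => 1
  | (m + 1) => Ical q k (m + 1) * Wmat q k m

/-- The q-epsilon tensor on `N` letters: `ε_q^{1...N} = 1`, zero on repeated
indices, and `ε_q^{...ab...} = −q(a,b) ε_q^{...ba...}` for adjacent swaps;
explicitly the product of the inversion factors `−q`. -/
def epsQ {N : ℕ} (q : Fin N → Fin N → ℂ) (i : Fin N → Fin N) : ℂ :=
  if Function.Injective i then
    ∏ p ∈ Finset.univ.filter (fun p : Fin N × Fin N => p.1 < p.2 ∧ i p.2 < i p.1),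
      (-(q (i p.1) (i p.2)))
  else 0

section EpsContractionProof

variable {N k : ℕ} {q : Fin N → Fin N → ℂ}

@[simp]
theorem Equiv.Perm.apply_inv_self {α : Type*} (f : Equiv.Perm α) (x : α) : f (f⁻¹ x) = x :=
  f.apply_symm_apply x

@[simp]
theorem Equiv.Perm.inv_apply_self {α : Type*} (f : Equiv.Perm α) (x : α) : f⁻¹ (f x) = x :=
  f.symm_apply_apply x

noncomputable def swF (q : Fin N → Fin N → ℂ) (σ : Equiv.Perm (Fin k))
    (f : Fin k → Fin N) : ℂ :=
  ∏ p : Fin k × Fin k,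
    if p.1 < p.2 ∧ σ⁻¹ p.2 < σ⁻¹ p.1 then -q (f p.1) (f p.2) else 1

noncomputable def Pm (q : Fin N → Fin N → ℂ) (σ : Equiv.Perm (Fin k)) :
    Matrix (Fin k → Fin N) (Fin k → Fin N) ℂ :=
  Matrix.of fun f g => if g = f ∘ σ then swF q σ f else 0

lemma qne (h2 : ∀ a b, q a b * q b a = 1) (a b : Fin N) : q a b ≠ 0 := by
  intro h
  have := h2 a b
  rw [h, zero_mul] at this
  exact zero_ne_one this


lemma qinv (h2 : ∀ a b, q a b * q b a = 1) (a b : Fin N) : (q a b)⁻¹ = q b a :=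
  inv_eq_of_mul_eq_one_right (h2 a b)


lemma swF_one (f : Fin k → Fin N) : swF q 1 f = 1 := by
  apply Finset.prod_eq_one
  intro p _
  rw [if_neg]
  rintro ⟨hlt, hlt'⟩
  simp only [inv_one, Equiv.Perm.coe_one, id_eq] at hlt'
  exact absurd hlt (asymm hlt')


lemma Pm_one : Pm (k := k) q 1 = 1 := by
  ext f g
  simp only [Pm, Matrix.of_apply, swF_one, Matrix.one_apply]
  congr 1
  simp only [eq_iff_iff]
  constructor
  · intro h; rw [h]; funext p; simp
  · intro h; rw [← h]; funext p; simp


lemma swap_adj_lt {t : ℕ} (ht : t + 1 < k) (x y : Fin k)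
    (hxy1 : ¬(x = (⟨t, Nat.lt_of_succ_lt ht⟩ : Fin k) ∧ y = (⟨t + 1, ht⟩ : Fin k)))
    (hxy2 : ¬(x = (⟨t + 1, ht⟩ : Fin k) ∧ y = (⟨t, Nat.lt_of_succ_lt ht⟩ : Fin k))) :
    (Equiv.swap (⟨t, Nat.lt_of_succ_lt ht⟩ : Fin k) ⟨t + 1, ht⟩ x <
      Equiv.swap (⟨t, Nat.lt_of_succ_lt ht⟩ : Fin k) ⟨t + 1, ht⟩ y ↔ x < y) := by
  simp only [Equiv.swap_apply_def, Fin.lt_def, Fin.ext_iff] at *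
  split_ifs <;> simp_all <;> omega


lemma swF_mul_swap (h2 : ∀ a b, q a b * q b a = 1) {t : ℕ} (ht : t + 1 < k)
    (σ : Equiv.Perm (Fin k)) (f : Fin k → Fin N) :
    swF q (σ * Equiv.swap (⟨t, Nat.lt_of_succ_lt ht⟩ : Fin k) ⟨t + 1, ht⟩) f
      = -q (f (σ ⟨t, Nat.lt_of_succ_lt ht⟩)) (f (σ ⟨t + 1, ht⟩)) * swF q σ f := by
  set A : Fin k := ⟨t, Nat.lt_of_succ_lt ht⟩ with hA
  set B : Fin k := ⟨t + 1, ht⟩ with hB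
  have hAB : A ≠ B := by simp [hA, hB, Fin.ext_iff]
  have hABlt : A < B := by simp [hA, hB, Fin.lt_def]
  set u := σ A with hu
  set v := σ B with hv
  have huv : u ≠ v := fun h => hAB (σ.injective h)
  set s := Equiv.swap A B with hs
  set L : Fin k × Fin k → ℂ := fun p =>
    if p.1 < p.2 ∧ (σ * s)⁻¹ p.2 < (σ * s)⁻¹ p.1 then -q (f p.1) (f p.2) else 1 with hL
  set G : Fin k × Fin k → ℂ := fun p =>
    if p.1 < p.2 ∧ σ⁻¹ p.2 < σ⁻¹ p.1 then -q (f p.1) (f p.2) else 1 with hG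
  have hinv : ∀ x : Fin k, (σ * s)⁻¹ x = s (σ⁻¹ x) := by
    intro x
    simp [mul_inv_rev, Equiv.Perm.mul_apply, hs, Equiv.swap_inv]
  have hmem : ((v, u) : Fin k × Fin k) ∈ (Finset.univ.erase (u, v)) := by
    simp [Prod.ext_iff]
    exact fun h _ => absurd h (huv.symm)
  have hsplit : ∀ (F : Fin k × Fin k → ℂ), ∏ p, F p
      = F (u, v) * (F (v, u) * ∏ p ∈ (Finset.univ.erase (u, v)).erase (v, u), F p) := by
    intro F
    rw [Finset.mul_prod_erase _ F hmem, Finset.mul_prod_erase _ F (Finset.mem_univ (u, v))]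
  have hrest : ∀ p ∈ (Finset.univ.erase (u, v)).erase (v, u), L p = G p := by
    intro p hp
    simp only [Finset.mem_erase] at hp
    obtain ⟨hp1, hp2, -⟩ := hp
    simp only [hL, hG, hinv]
    congr 1
    simp only [eq_iff_iff]
    constructor
    · rintro ⟨h', hlt⟩
      refine ⟨h', ?_⟩
      rwa [swap_adj_lt ht (σ⁻¹ p.2) (σ⁻¹ p.1) ?_ ?_] at hlt
      · rintro ⟨e1, e2⟩
        apply hp1
        have : p.2 = u := by rw [← Equiv.Perm.apply_inv_self σ p.2, e1, hu]
        have h2' : p.1 = v := by rw [← Equiv.Perm.apply_inv_self σ p.1, e2, hv]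
        exact absurd (Prod.ext h2' this) hp1
      · rintro ⟨e1, e2⟩
        have : p.2 = v := by rw [← Equiv.Perm.apply_inv_self σ p.2, e1, hv]
        have h2' : p.1 = u := by rw [← Equiv.Perm.apply_inv_self σ p.1, e2, hu]
        exact absurd (Prod.ext h2' this) hp2
    · rintro ⟨h', hlt⟩
      refine ⟨h', ?_⟩
      rw [swap_adj_lt ht (σ⁻¹ p.2) (σ⁻¹ p.1) ?_ ?_]
      · exact hlt
      · rintro ⟨e1, e2⟩
        have : p.2 = u := by rw [← Equiv.Perm.apply_inv_self σ p.2, e1, hu]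
        have h2' : p.1 = v := by rw [← Equiv.Perm.apply_inv_self σ p.1, e2, hv]
        exact absurd (Prod.ext h2' this) hp1
      · rintro ⟨e1, e2⟩
        have : p.2 = v := by rw [← Equiv.Perm.apply_inv_self σ p.2, e1, hv]
        have h2' : p.1 = u := by rw [← Equiv.Perm.apply_inv_self σ p.1, e2, hu]
        exact absurd (Prod.ext h2' this) hp2
  have hmain : (swF q (σ * s) f) = ∏ p, L p := rfl
  have hmain2 : (swF q σ f) = ∏ p, G p := rfl
  rw [hmain, hmain2, hsplit L, hsplit G, Finset.prod_congr rfl hrest]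
  have hLuv : L (u, v) = if u < v then -q (f u) (f v) else 1 := by
    simp only [hL, hinv]
    have e1 : σ⁻¹ v = B := by rw [hv, Equiv.Perm.inv_apply_self]
    have e2 : σ⁻¹ u = A := by rw [hu, Equiv.Perm.inv_apply_self]
    rw [e1, e2, hs, Equiv.swap_apply_right, Equiv.swap_apply_left]
    simp [hABlt]
  have hLvu : L (v, u) = 1 := by
    simp only [hL, hinv]
    have e1 : σ⁻¹ v = B := by rw [hv, Equiv.Perm.inv_apply_self]
    have e2 : σ⁻¹ u = A := by rw [hu, Equiv.Perm.inv_apply_self]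
    rw [e1, e2, hs, Equiv.swap_apply_right, Equiv.swap_apply_left, if_neg]
    rintro ⟨-, hc⟩
    exact absurd hABlt (asymm hc)
  have hGuv : G (u, v) = 1 := by
    simp only [hG]
    have e1 : σ⁻¹ v = B := by rw [hv, Equiv.Perm.inv_apply_self]
    have e2 : σ⁻¹ u = A := by rw [hu, Equiv.Perm.inv_apply_self]
    rw [e1, e2, if_neg]
    rintro ⟨-, hc⟩
    exact absurd hABlt (asymm hc)
  have hGvu : G (v, u) = if v < u then -q (f v) (f u) else 1 := by
    simp only [hG]
    have e1 : σ⁻¹ v = B := by rw [hv, Equiv.Perm.inv_apply_self]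
    have e2 : σ⁻¹ u = A := by rw [hu, Equiv.Perm.inv_apply_self]
    rw [e1, e2]
    simp [hABlt]
  rw [hLuv, hLvu, hGuv, hGvu]
  rcases lt_or_gt_of_ne huv with hlt | hlt
  · rw [if_pos hlt, if_neg (asymm hlt)]
    ring
  · rw [if_neg (asymm hlt), if_pos hlt]
    have : -q (f u) (f v) * (1 * (-q (f v) (f u) * ∏ p ∈ (Finset.univ.erase (u, v)).erase (v, u), G p))
        = (q (f u) (f v) * q (f v) (f u)) * ∏ p ∈ (Finset.univ.erase (u, v)).erase (v, u), G p := by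
      ring
    rw [this, h2, one_mul]


lemma swap_mul_swF (h2 : ∀ a b, q a b * q b a = 1) {t : ℕ} (ht : t + 1 < k)
    (σ : Equiv.Perm (Fin k)) (f : Fin k → Fin N) :
    swF q (Equiv.swap (⟨t, Nat.lt_of_succ_lt ht⟩ : Fin k) ⟨t + 1, ht⟩ * σ) f
      = -q (f ⟨t, Nat.lt_of_succ_lt ht⟩) (f ⟨t + 1, ht⟩)
          * swF q σ (f ∘ Equiv.swap (⟨t, Nat.lt_of_succ_lt ht⟩ : Fin k) ⟨t + 1, ht⟩) := by
  set A : Fin k := ⟨t, Nat.lt_of_succ_lt ht⟩ with hA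
  set B : Fin k := ⟨t + 1, ht⟩ with hB
  have hAB : A ≠ B := by simp [hA, hB, Fin.ext_iff]
  have hABlt : A < B := by simp [hA, hB, Fin.lt_def]
  set s := Equiv.swap A B with hs
  have hss : ∀ x, s (s x) = x := fun x => Equiv.swap_apply_self A B x
  set L : Fin k × Fin k → ℂ := fun p =>
    if p.1 < p.2 ∧ (s * σ)⁻¹ p.2 < (s * σ)⁻¹ p.1 then -q (f p.1) (f p.2) else 1 with hL
  set G : Fin k × Fin k → ℂ := fun p =>
    if p.1 < p.2 ∧ σ⁻¹ p.2 < σ⁻¹ p.1 then -q ((f ∘ s) p.1) ((f ∘ s) p.2) else 1 with hG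
  have hinv : ∀ x : Fin k, (s * σ)⁻¹ x = σ⁻¹ (s x) := by
    intro x
    simp [mul_inv_rev, Equiv.Perm.mul_apply, hs, Equiv.swap_inv]
  have hmem : ((B, A) : Fin k × Fin k) ∈ (Finset.univ.erase (A, B)) := by
    simp [Prod.ext_iff]
    exact fun h _ => absurd h (hAB.symm)
  have hsplit : ∀ (F : Fin k × Fin k → ℂ), ∏ p, F p
      = F (A, B) * (F (B, A) * ∏ p ∈ (Finset.univ.erase (A, B)).erase (B, A), F p) := by
    intro F
    rw [Finset.mul_prod_erase _ F hmem, Finset.mul_prod_erase _ F (Finset.mem_univ (A, B))]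
  have hrest : ∏ p ∈ (Finset.univ.erase (A, B)).erase (B, A), L p
      = ∏ p ∈ (Finset.univ.erase (A, B)).erase (B, A), G p := by
    apply Finset.prod_nbij' (fun p : Fin k × Fin k => (s p.1, s p.2))
      (fun p : Fin k × Fin k => (s p.1, s p.2))
    · intro p hp
      simp only [Finset.mem_erase, Finset.mem_univ, and_true] at hp ⊢
      obtain ⟨hp1, hp2⟩ := hp
      have key : ∀ (x y : Fin k), (s p.1, s p.2) = (x, y) → p = (s x, s y) := by
        intro x y h
        have h1 := congrArg Prod.fst h
        have h2' := congrArg Prod.snd h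
        simp only at h1 h2'
        exact Prod.ext (by rw [← h1, hss]) (by rw [← h2', hss])
      constructor
      · intro h
        exact hp2 (by rw [key B A h, hs, Equiv.swap_apply_right, Equiv.swap_apply_left])
      · intro h
        exact hp1 (by rw [key A B h, hs, Equiv.swap_apply_right, Equiv.swap_apply_left])
    · intro p hp
      simp only [Finset.mem_erase, Finset.mem_univ, and_true] at hp ⊢
      obtain ⟨hp1, hp2⟩ := hp
      have key : ∀ (x y : Fin k), (s p.1, s p.2) = (x, y) → p = (s x, s y) := by
        intro x y h
        have h1 := congrArg Prod.fst h
        have h2' := congrArg Prod.snd h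
        simp only at h1 h2'
        exact Prod.ext (by rw [← h1, hss]) (by rw [← h2', hss])
      constructor
      · intro h
        exact hp2 (by rw [key B A h, hs, Equiv.swap_apply_right, Equiv.swap_apply_left])
      · intro h
        exact hp1 (by rw [key A B h, hs, Equiv.swap_apply_right, Equiv.swap_apply_left])
    · intro p _; simp [hss]
    · intro p _; simp [hss]
    · intro p hp
      simp only [Finset.mem_erase, Finset.mem_univ, and_true] at hp
      obtain ⟨hp1, hp2⟩ := hp
      simp only [hL, hG, hinv, Function.comp_apply, hss]
      congr 1
      simp only [eq_iff_iff]
      have hlt : s p.1 < s p.2 ↔ p.1 < p.2 := by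
        apply swap_adj_lt ht
        · rintro ⟨e1, e2⟩; exact hp2 (Prod.ext e1 e2)
        · rintro ⟨e1, e2⟩; exact hp1 (Prod.ext e1 e2)
      tauto
  rw [show swF q (s * σ) f = ∏ p, L p from rfl,
      show swF q σ (f ∘ s) = ∏ p, G p from rfl, hsplit L, hsplit G, hrest]
  have e1 : (s * σ)⁻¹ B = σ⁻¹ A := by rw [hinv, hs, Equiv.swap_apply_right]
  have e2 : (s * σ)⁻¹ A = σ⁻¹ B := by rw [hinv, hs, Equiv.swap_apply_left]
  have hLBA : L (B, A) = 1 := by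
    simp only [hL]
    rw [if_neg]
    rintro ⟨hc, -⟩
    exact absurd hABlt (asymm hc)
  have hGBA : G (B, A) = 1 := by
    simp only [hG]
    rw [if_neg]
    rintro ⟨hc, -⟩
    exact absurd hABlt (asymm hc)
  have hLAB : L (A, B) = if σ⁻¹ A < σ⁻¹ B then -q (f A) (f B) else 1 := by
    simp only [hL, e1, e2]
    by_cases hc : σ⁻¹ A < σ⁻¹ B
    · rw [if_pos ⟨hABlt, hc⟩, if_pos hc]
    · rw [if_neg (fun hh => hc hh.2), if_neg hc]
  have hGAB : G (A, B) = if σ⁻¹ B < σ⁻¹ A then -q (f B) (f A) else 1 := by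
    simp only [hG, Function.comp_apply]
    rw [hs, Equiv.swap_apply_left, Equiv.swap_apply_right]
    by_cases hc : σ⁻¹ B < σ⁻¹ A
    · rw [if_pos ⟨hABlt, hc⟩, if_pos hc]
    · rw [if_neg (fun hh => hc hh.2), if_neg hc]
  rw [hLAB, hLBA, hGAB, hGBA]
  have hne : σ⁻¹ A ≠ σ⁻¹ B := fun h => hAB (σ⁻¹.injective h)
  rcases lt_or_gt_of_ne hne with hlt | hlt
  · rw [if_pos hlt, if_neg (asymm hlt)]
    ring
  · rw [if_neg (asymm hlt), if_pos hlt]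
    have : -q (f A) (f B) * (-q (f B) (f A) * (1 * ∏ p ∈ (Finset.univ.erase (A, B)).erase (B, A), G p))
        = (q (f A) (f B) * q (f B) (f A)) * ∏ p ∈ (Finset.univ.erase (A, B)).erase (B, A), G p := by
      ring
    rw [this, h2, one_mul]


lemma perm_fix_lt {m : ℕ} {τ : Equiv.Perm (Fin k)}
    (hτ : ∀ p : Fin k, m ≤ p.val → τ p = p) :
    ∀ p : Fin k, p.val < m → (τ p).val < m := by
  intro p hp
  by_contra hc
  push_neg at hc
  have h1 := hτ (τ p) hc
  have h2 := τ.injective h1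
  rw [h2] at hc
  omega


lemma perm_inv_fix {m : ℕ} {τ : Equiv.Perm (Fin k)}
    (hτ : ∀ p : Fin k, m ≤ p.val → τ p = p) :
    ∀ p : Fin k, m ≤ p.val → τ⁻¹ p = p := by
  intro p hp
  apply τ.injective
  rw [Equiv.Perm.apply_inv_self, hτ p hp]


lemma swF_cocycle (m : ℕ) (σ τ : Equiv.Perm (Fin k))
    (hτ : ∀ p : Fin k, m ≤ p.val → τ p = p)
    (hσ : ∀ p p' : Fin k, p.val < m → p'.val < m → p < p' → σ p < σ p')
    (f : Fin k → Fin N) :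
    swF q (σ * τ) f = swF q σ f * swF q τ (f ∘ σ) := by
  have hτinv := perm_inv_fix hτ
  have hτinvlt := perm_fix_lt hτinv
  have keyc : ∀ x y : Fin k, ¬(x.val < m ∧ y.val < m) → (τ⁻¹ y < τ⁻¹ x ↔ y < x) := by
    intro x y hxy
    by_cases hx : x.val < m
    · have hy : m ≤ y.val := by omega
      rw [hτinv y hy]
      have := hτinvlt x hx
      simp only [Fin.lt_def]
      omega
    · push_neg at hx
      rw [hτinv x hx]
      by_cases hy : y.val < m
      · have := hτinvlt y hy
        simp only [Fin.lt_def]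
        omega
      · push_neg at hy
        rw [hτinv y hy]
  have hmono_iff : ∀ p p' : Fin k, p.val < m → p'.val < m → (σ p < σ p' ↔ p < p') := by
    intro p p' hp hp'
    constructor
    · intro h
      rcases lt_trichotomy p p' with hc | hc | hc
      · exact hc
      · rw [hc] at h; exact absurd h (lt_irrefl _)
      · exact absurd (hσ p' p hp' hp hc) (asymm h)
    · exact hσ p p' hp hp'
  set InA : Fin k × Fin k → Prop := fun p => (σ⁻¹ p.1).val < m ∧ (σ⁻¹ p.2).val < m with hInA
  have hmulinv : ∀ x : Fin k, (σ * τ)⁻¹ x = τ⁻¹ (σ⁻¹ x) := by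
    intro x; simp [mul_inv_rev, Equiv.Perm.mul_apply]
  set ST : Fin k × Fin k → ℂ := fun p =>
    if p.1 < p.2 ∧ (σ * τ)⁻¹ p.2 < (σ * τ)⁻¹ p.1 then -q (f p.1) (f p.2) else 1 with hST
  set S : Fin k × Fin k → ℂ := fun p =>
    if p.1 < p.2 ∧ σ⁻¹ p.2 < σ⁻¹ p.1 then -q (f p.1) (f p.2) else 1 with hS
  set T : Fin k × Fin k → ℂ := fun p =>
    if p.1 < p.2 ∧ τ⁻¹ p.2 < τ⁻¹ p.1 then -q ((f ∘ σ) p.1) ((f ∘ σ) p.2) else 1 with hT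
  have split1 : swF q (σ * τ) f
      = (∏ p ∈ Finset.univ.filter InA, ST p) * ∏ p ∈ Finset.univ.filter (fun p => ¬InA p), ST p := by
    rw [show swF q (σ * τ) f = ∏ p, ST p from rfl,
      Finset.prod_filter_mul_prod_filter_not Finset.univ InA ST]
  have split2 : swF q σ f
      = (∏ p ∈ Finset.univ.filter InA, S p) * ∏ p ∈ Finset.univ.filter (fun p => ¬InA p), S p := by
    rw [show swF q σ f = ∏ p, S p from rfl,
      Finset.prod_filter_mul_prod_filter_not Finset.univ InA S]
  have partA : ∏ p ∈ Finset.univ.filter (fun p => ¬InA p), ST p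
      = ∏ p ∈ Finset.univ.filter (fun p => ¬InA p), S p := by
    apply Finset.prod_congr rfl
    intro p hp
    simp only [Finset.mem_filter, hInA] at hp
    simp only [hST, hS, hmulinv]
    congr 1
    simp only [eq_iff_iff]
    have := keyc (σ⁻¹ p.1) (σ⁻¹ p.2) hp.2
    tauto
  have partB : ∏ p ∈ Finset.univ.filter InA, S p = 1 := by
    apply Finset.prod_eq_one
    intro p hp
    simp only [Finset.mem_filter, hInA] at hp
    rw [show S p = if p.1 < p.2 ∧ σ⁻¹ p.2 < σ⁻¹ p.1 then -q (f p.1) (f p.2) else 1 from rfl,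
      if_neg]
    rintro ⟨hlt, hlt'⟩
    have := hσ _ _ hp.2.2 hp.2.1 hlt'
    rw [Equiv.Perm.apply_inv_self, Equiv.Perm.apply_inv_self] at this
    exact absurd hlt (asymm this)
  have partC : ∏ p ∈ Finset.univ.filter InA, ST p = swF q τ (f ∘ σ) := by
    have e1 : swF q τ (f ∘ σ) = ∏ p, T p := rfl
    have e2 : ∏ p, T p
        = (∏ p ∈ Finset.univ.filter (fun p : Fin k × Fin k => p.1.val < m ∧ p.2.val < m), T p)
          * ∏ p ∈ Finset.univ.filter (fun p : Fin k × Fin k => ¬(p.1.val < m ∧ p.2.val < m)), T p :=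
      (Finset.prod_filter_mul_prod_filter_not Finset.univ _ T).symm
    have e3 : ∏ p ∈ Finset.univ.filter (fun p : Fin k × Fin k => ¬(p.1.val < m ∧ p.2.val < m)), T p = 1 := by
      apply Finset.prod_eq_one
      intro p hp
      simp only [Finset.mem_filter] at hp
      rw [show T p = if p.1 < p.2 ∧ τ⁻¹ p.2 < τ⁻¹ p.1 then -q ((f ∘ ⇑σ) p.1) ((f ∘ ⇑σ) p.2) else 1
        from rfl, if_neg]
      rintro ⟨hlt, hlt'⟩
      rw [keyc p.1 p.2 hp.2] at hlt'
      exact absurd hlt (asymm hlt')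
    have e4 : ∏ p ∈ Finset.univ.filter (fun p : Fin k × Fin k => p.1.val < m ∧ p.2.val < m), T p
        = ∏ p ∈ Finset.univ.filter InA, ST p := by
      apply Finset.prod_nbij' (fun p : Fin k × Fin k => (σ p.1, σ p.2))
        (fun p : Fin k × Fin k => (σ⁻¹ p.1, σ⁻¹ p.2))
      · intro p hp
        simp only [Finset.mem_filter, Finset.mem_univ, true_and, hInA] at hp ⊢
        simpa only [Equiv.Perm.inv_apply_self] using hp
      · intro p hp
        simp only [Finset.mem_filter, Finset.mem_univ, true_and, hInA] at hp ⊢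
        exact hp
      · intro p _; simp
      · intro p _; simp
      · intro p hp
        simp only [Finset.mem_filter, Finset.mem_univ, true_and] at hp
        simp only [hT, hST, hmulinv, Equiv.Perm.inv_apply_self, Function.comp_apply]
        congr 1
        simp only [eq_iff_iff]
        have := hmono_iff p.1 p.2 hp.1 hp.2
        tauto
    rw [e1, e2, e3, e4, mul_one]
  rw [split1, split2, partA, partB, partC, one_mul]
  ring


lemma Pm_mul_lam (h2 : ∀ a b, q a b * q b a = 1) {t : ℕ} (ht : t + 1 < k)
    (σ : Equiv.Perm (Fin k)) :
    Pm q σ * lamPos q k t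
      = -(Pm q (σ * Equiv.swap (⟨t, Nat.lt_of_succ_lt ht⟩ : Fin k) ⟨t + 1, ht⟩)) := by
  set A : Fin k := ⟨t, Nat.lt_of_succ_lt ht⟩
  set B : Fin k := ⟨t + 1, ht⟩
  ext f g
  rw [Matrix.mul_apply]
  simp only [lamPos, ht, ↓reduceDIte, Pm, Matrix.of_apply, Matrix.neg_apply]
  rw [Finset.sum_eq_single (f ∘ ⇑σ)]
  · rw [if_pos rfl]
    have hcomp : (f ∘ ⇑σ) ∘ ⇑(Equiv.swap A B) = f ∘ ⇑(σ * Equiv.swap A B) := by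
      funext p
      simp [Equiv.Perm.mul_apply]
    by_cases hg : g = f ∘ ⇑(σ * Equiv.swap A B)
    · rw [if_pos (by rw [hg, hcomp]), if_pos hg, swF_mul_swap h2 ht]
      simp only [Function.comp_apply]
      ring
    · rw [if_neg (fun hc => hg (by rwa [hcomp] at hc)), if_neg hg, mul_zero, neg_zero]
  · intro h _ hne
    rw [if_neg hne, zero_mul]
  · intro h
    exact absurd (Finset.mem_univ _) h

lemma lam_mul_Pm (h2 : ∀ a b, q a b * q b a = 1) {t : ℕ} (ht : t + 1 < k)
    (σ : Equiv.Perm (Fin k)) :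
    lamPos q k t * Pm q σ
      = -(Pm q (Equiv.swap (⟨t, Nat.lt_of_succ_lt ht⟩ : Fin k) ⟨t + 1, ht⟩ * σ)) := by
  set A : Fin k := ⟨t, Nat.lt_of_succ_lt ht⟩
  set B : Fin k := ⟨t + 1, ht⟩
  ext f g
  rw [Matrix.mul_apply]
  simp only [lamPos, ht, ↓reduceDIte, Pm, Matrix.of_apply, Matrix.neg_apply]
  rw [Finset.sum_eq_single (f ∘ ⇑(Equiv.swap A B))]
  · rw [if_pos rfl]
    have hcomp : (f ∘ ⇑(Equiv.swap A B)) ∘ ⇑σ = f ∘ ⇑(Equiv.swap A B * σ) := by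
      funext p
      simp [Equiv.Perm.mul_apply]
    by_cases hg : g = f ∘ ⇑(Equiv.swap A B * σ)
    · rw [if_pos (by rw [hg, hcomp]), if_pos hg, swap_mul_swF h2 ht]
      ring
    · rw [if_neg (fun hc => hg (by rwa [hcomp] at hc)), if_neg hg, mul_zero, neg_zero]
  · intro h _ hne
    rw [if_neg hne, zero_mul]
  · intro h
    exact absurd (Finset.mem_univ _) h

lemma Pm_mul_Pm (m : ℕ) (σ τ : Equiv.Perm (Fin k))
    (hτ : ∀ p : Fin k, m ≤ p.val → τ p = p)
    (hσ : ∀ p p' : Fin k, p.val < m → p'.val < m → p < p' → σ p < σ p') :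
    Pm q σ * Pm q τ = Pm q (σ * τ) := by
  ext f g
  rw [Matrix.mul_apply]
  simp only [Pm, Matrix.of_apply]
  rw [Finset.sum_eq_single (f ∘ ⇑σ)]
  · rw [if_pos rfl]
    have hcomp : (f ∘ ⇑σ) ∘ ⇑τ = f ∘ ⇑(σ * τ) := by
      funext p
      simp [Equiv.Perm.mul_apply]
    by_cases hg : g = f ∘ ⇑(σ * τ)
    · rw [if_pos (by rw [hg, hcomp]), if_pos hg, swF_cocycle m σ τ hτ hσ]
    · rw [if_neg (fun hc => hg (by rwa [hcomp] at hc)), if_neg hg, mul_zero]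
  · intro h _ hne
    rw [if_neg hne, zero_mul]
  · intro h
    exact absurd (Finset.mem_univ _) h

lemma strictmono_perm_eq_one (σ : Equiv.Perm (Fin k)) (h : StrictMono ⇑σ) : σ = 1 := by
  have hr : Set.range ⇑σ = Set.range (id : Fin k → Fin k) := by
    rw [σ.surjective.range_eq, Set.range_id]
  haveI : WellFoundedLT (Fin k) := inferInstance
  have := (h.range_inj (strictMono_id (α := Fin k))).mp hr
  exact Equiv.ext fun p => congrFun this p

/-- predicate for coset representatives -/
def CmP (m : ℕ) (σ : Equiv.Perm (Fin k)) : Prop :=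
  (∀ p : Fin k, m < p.val → σ p = p) ∧
    ∀ p p' : Fin k, p.val < m → p'.val < m → p < p' → σ p < σ p'

instance (m : ℕ) : DecidablePred (CmP (k := k) m) := fun _ =>
  instDecidableAnd

lemma CmP_val_le {m : ℕ} {σ : Equiv.Perm (Fin k)}
    (h1 : ∀ p : Fin k, m < p.val → σ p = p) :
    ∀ p : Fin k, p.val ≤ m → (σ p).val ≤ m := by
  intro p hp
  have := perm_fix_lt (m := m + 1) (τ := σ) (fun p hp => h1 p (by omega)) p (by omega)
  omega

lemma CmP_one (m : ℕ) : CmP (k := k) m 1 := by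
  constructor
  · intro p _; rfl
  · intro p p' _ _ h; exact h

lemma Ical_formula (h2 : ∀ a b, q a b * q b a = 1) :
    ∀ m : ℕ, m < k →
      Ical q k (m + 1) = ∑ σ ∈ Finset.univ.filter (CmP m), Pm q σ := by
  intro m
  induction m with
  | zero =>
    intro h0
    have hfilter : Finset.univ.filter (CmP (k := k) 0) = {1} := by
      ext σ
      simp only [Finset.mem_filter, Finset.mem_univ, true_and, Finset.mem_singleton]
      constructor
      · rintro ⟨hfix, -⟩
        apply Equiv.ext
        intro p
        by_cases hp : 0 < p.val
        · exact hfix p hp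
        · have hp0 : p.val = 0 := by omega
          by_contra hc
          have hne : σ p ≠ p := fun hh => hc (by rw [hh]; rfl)
          have hgt : 0 < (σ p).val := by
            rcases Nat.eq_zero_or_pos (σ p).val with h | h
            · exact absurd (Fin.ext (by omega) : σ p = p) hne
            · exact h
          have := hfix (σ p) hgt
          exact hne (σ.injective this)
      · intro h; rw [h]; exact CmP_one 0
    rw [hfilter, Finset.sum_singleton, Pm_one]
    rfl
  | succ n ih =>
    intro h
    have hn : n < k := by omega
    set A : Fin k := ⟨n, Nat.lt_of_succ_lt h⟩ with hA
    set B : Fin k := ⟨n + 1, h⟩ with hB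
    set s := Equiv.swap A B with hs
    have hsA : s A = B := Equiv.swap_apply_left A B
    have hsB : s B = A := Equiv.swap_apply_right A B
    have hAval : (A : Fin k).val = n := rfl
    have hBval : (B : Fin k).val = n + 1 := rfl
    have hsother : ∀ p : Fin k, p.val ≠ n → p.val ≠ n + 1 → s p = p := by
      intro p hp1 hp2
      exact Equiv.swap_apply_of_ne_of_ne (fun hh => hp1 (by rw [hh]))
        (fun hh => hp2 (by rw [hh]))
    have step1 : Ical q k (n + 1 + 1) = 1 - Ical q k (n + 1) * lamPos q k n := rfl
    rw [step1, ih hn, Finset.sum_mul]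
    have hterm : ∀ σ ∈ Finset.univ.filter (CmP (k := k) n),
        Pm q σ * lamPos q k n = -(Pm q (σ * s)) := by
      intro σ _
      exact Pm_mul_lam h2 h σ
    rw [Finset.sum_congr rfl hterm, Finset.sum_neg_distrib, sub_neg_eq_add]
    have hbij : ∑ σ ∈ Finset.univ.filter (CmP (k := k) n), Pm q (σ * s)
        = ∑ σ ∈ (Finset.univ.filter (CmP (k := k) (n + 1))).erase 1, Pm q σ := by
      apply Finset.sum_nbij' (fun σ => σ * s) (fun σ => σ * s)
      · intro σ hσ
        simp only [Finset.mem_filter, Finset.mem_univ, true_and] at hσ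
        obtain ⟨hfix, hmono⟩ := hσ
        have hval : ∀ p : Fin k, p.val ≤ n → (σ p).val ≤ n := CmP_val_le hfix
        simp only [Finset.mem_erase, Finset.mem_filter, Finset.mem_univ, true_and]
        refine ⟨?_, ?_, ?_⟩
        · intro hc
          have hc2 : (σ * s) B = B := by rw [hc]; rfl
          rw [Equiv.Perm.mul_apply, hsB] at hc2
          have hc3 : (σ A).val = n + 1 := by rw [hc2]
          have hc4 := hval A (le_of_eq hAval)
          omega
        · intro p hp
          rw [Equiv.Perm.mul_apply, hsother p (by omega) (by omega), hfix p (by omega)]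
        · intro p p' hp hp' hlt
          rw [Equiv.Perm.mul_apply, Equiv.Perm.mul_apply]
          by_cases hp'n : p'.val = n
          · have hpn : p.val < n := by
              have := Fin.lt_def.mp hlt
              omega
            rw [show p' = A from Fin.ext hp'n, hsA, hfix B (by omega),
              hsother p (by omega) (by omega)]
            have hvp := hval p (by omega)
            have hgoal : (σ p).val < (B : Fin k).val := by omega
            exact Fin.lt_def.mpr hgoal
          · have hp'n' : p'.val < n := by omega
            have hpn : p.val < n := by
              have := Fin.lt_def.mp hlt
              omega
            rw [hsother p (by omega) (by omega), hsother p' (by omega) (by omega)]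
            exact hmono p p' (by omega) (by omega) hlt
      · intro σ' hσ'
        simp only [Finset.mem_erase, Finset.mem_filter, Finset.mem_univ, true_and] at hσ'
        obtain ⟨hne1, hfix, hmono⟩ := hσ'
        have hval : ∀ p : Fin k, p.val ≤ n + 1 → (σ' p).val ≤ n + 1 := CmP_val_le hfix
        -- σ' does not fix B
        have hnB : σ' B ≠ B := by
          intro hc
          apply hne1
          apply strictmono_perm_eq_one
          intro x y hxy
          have hxy' := Fin.lt_def.mp hxy
          by_cases hy : y.val < n + 1
          · exact hmono x y (by omega) hy hxy
          · have hyfix : σ' y = y := by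
              by_cases hy1 : y.val = n + 1
              · rw [show y = B from Fin.ext hy1, hc]
              · exact hfix y (by omega)
            rw [hyfix]
            by_cases hx : x.val < n + 1
            · have h1 := hval x (by omega)
              have h2' : σ' x ≠ B := by
                intro hcc
                have := σ'.injective (hcc.trans hc.symm)
                rw [this] at hx
                simp only [hB] at hx
                omega
              have h3 : (σ' x).val ≠ n + 1 := fun hcc => h2' (Fin.ext hcc)
              have hgoal : (σ' x).val < y.val := by omega
              exact Fin.lt_def.mpr hgoal
            · have hxfix : σ' x = x := by
                by_cases hx1 : x.val = n + 1
                · rw [show x = B from Fin.ext hx1, hc]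
                · exact hfix x (by omega)
              rw [hxfix]
              exact hxy
        -- σ' A = B
        have hAB' : σ' A = B := by
          set y := σ'⁻¹ B with hy
          have hyv : σ' y = B := Equiv.Perm.apply_inv_self σ' B
          by_cases h1' : n + 1 < y.val
          · rw [hfix y h1'] at hyv
            rw [hyv] at h1'
            simp only [hB] at h1'
            omega
          · by_cases h2' : y.val = n + 1
            · exfalso
              rw [show y = B from Fin.ext h2'] at hyv
              exact hnB hyv
            · by_cases h3' : y.val = n
              · rw [show y = A from Fin.ext h3'] at hyv
                exact hyv
              · exfalso
                have hylt : y.val < n := by omega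
                have hlt2 := hmono y A (by omega) (by omega) (Fin.lt_def.mpr (by omega))
                rw [hyv] at hlt2
                have hlt3 := Fin.lt_def.mp hlt2
                have hvA := hval A (by omega)
                omega
        simp only [Finset.mem_filter, Finset.mem_univ, true_and]
        constructor
        · intro p hp
          rw [Equiv.Perm.mul_apply]
          by_cases hp1 : p.val = n + 1
          · rw [show p = B from Fin.ext hp1, hsB]
            exact hAB'
          · rw [hsother p (by omega) (by omega), hfix p (by omega)]
        · intro p p' hp hp' hlt
          rw [Equiv.Perm.mul_apply, Equiv.Perm.mul_apply,
            hsother p (by omega) (by omega), hsother p' (by omega) (by omega)]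
          exact hmono p p' (by omega) (by omega) hlt
      · intro σ _
        rw [mul_assoc, hs, Equiv.swap_mul_self, mul_one]
      · intro σ _
        rw [mul_assoc, hs, Equiv.swap_mul_self, mul_one]
      · intro σ _
        rfl
    rw [hbij]
    have hone : (1 : Equiv.Perm (Fin k)) ∈ Finset.univ.filter (CmP (k := k) (n + 1)) := by
      simp only [Finset.mem_filter, Finset.mem_univ, true_and]
      exact CmP_one (n + 1)
    rw [← Finset.add_sum_erase _ _ hone, Pm_one]

def cpm (m v : ℕ) (hm : m < k) (hv : v ≤ m) : Equiv.Perm (Fin k) where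
  toFun p := ⟨if p.val = m then v else if v ≤ p.val ∧ p.val < m then p.val + 1 else p.val, by
    have := p.isLt
    split_ifs <;> omega⟩
  invFun p := ⟨if p.val = v then m else if v < p.val ∧ p.val ≤ m then p.val - 1 else p.val, by
    have := p.isLt
    split_ifs <;> omega⟩
  left_inv p := by
    have := p.isLt
    apply Fin.ext
    simp only
    split_ifs <;> omega
  right_inv p := by
    have := p.isLt
    apply Fin.ext
    simp only
    split_ifs <;> omega

lemma cpm_val {m v : ℕ} (hm : m < k) (hv : v ≤ m) (p : Fin k) :
    (cpm m v hm hv p).val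
      = if p.val = m then v else if v ≤ p.val ∧ p.val < m then p.val + 1 else p.val := rfl

lemma cpm_CmP {m v : ℕ} (hm : m < k) (hv : v ≤ m) : CmP m (cpm m v hm hv) := by
  constructor
  · intro p hp
    apply Fin.ext
    rw [cpm_val]
    split_ifs <;> omega
  · intro p p' hp hp' hlt
    have hlt' := Fin.lt_def.mp hlt
    apply Fin.lt_def.mpr
    rw [cpm_val, cpm_val]
    split_ifs <;> omega

lemma cpm_at {m v : ℕ} (hm : m < k) (hv : v ≤ m) :
    (cpm m v hm hv ⟨m, hm⟩).val = v := by
  rw [cpm_val]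
  simp

lemma CmP_unique {m : ℕ} (hm : m < k) {σ σ' : Equiv.Perm (Fin k)}
    (hσ : CmP m σ) (hσ' : CmP m σ') (hval : σ ⟨m, hm⟩ = σ' ⟨m, hm⟩) : σ = σ' := by
  obtain ⟨hfix, hmono⟩ := hσ
  obtain ⟨hfix', hmono'⟩ := hσ'
  have hmk : m ≤ k := hm.le
  have hrange : ∀ σ₀ : Equiv.Perm (Fin k), (∀ p : Fin k, m < p.val → σ₀ p = p) →
      Set.range (fun a : Fin m => σ₀ (Fin.castLE hmk a))
        = {x : Fin k | x.val ≤ m ∧ x ≠ σ₀ ⟨m, hm⟩} := by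
    intro σ₀ hfix₀
    ext x
    simp only [Set.mem_range, Set.mem_setOf_eq]
    constructor
    · rintro ⟨a, rfl⟩
      have ha : (Fin.castLE hmk a).val ≤ m := le_of_lt a.isLt
      refine ⟨CmP_val_le hfix₀ _ ha, ?_⟩
      intro hcc
      have := σ₀.injective hcc
      have := congrArg Fin.val this
      simp only [Fin.coe_castLE] at this
      omega
    · rintro ⟨hx1, hx2⟩
      have hyx : σ₀ (σ₀⁻¹ x) = x := Equiv.Perm.apply_inv_self σ₀ x
      by_cases hy1 : m < (σ₀⁻¹ x).val
      · rw [hfix₀ _ hy1] at hyx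
        rw [hyx] at hy1
        omega
      · push_neg at hy1
        by_cases hy2 : (σ₀⁻¹ x).val = m
        · exfalso
          apply hx2
          rw [← hyx, show σ₀⁻¹ x = ⟨m, hm⟩ from Fin.ext hy2]
        · refine ⟨⟨(σ₀⁻¹ x).val, by omega⟩, ?_⟩
          rw [show Fin.castLE hmk ⟨(σ₀⁻¹ x).val, by omega⟩ = σ₀⁻¹ x from Fin.ext rfl]
          exact hyx
  have hFmono : StrictMono (fun a : Fin m => σ (Fin.castLE hmk a)) := by
    intro a b hab
    exact hmono _ _ a.isLt b.isLt (Fin.lt_def.mpr (Fin.lt_def.mp hab))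
  have hFmono' : StrictMono (fun a : Fin m => σ' (Fin.castLE hmk a)) := by
    intro a b hab
    exact hmono' _ _ a.isLt b.isLt (Fin.lt_def.mpr (Fin.lt_def.mp hab))
  haveI : WellFoundedLT (Fin m) := inferInstance
  have hFF : (fun a : Fin m => σ (Fin.castLE hmk a)) = fun a : Fin m => σ' (Fin.castLE hmk a) := by
    apply (hFmono.range_inj hFmono').mp
    rw [hrange σ hfix, hrange σ' hfix', hval]
  apply Equiv.ext
  intro p
  by_cases hp1 : p.val < m
  · have := congrFun hFF ⟨p.val, hp1⟩
    rwa [show Fin.castLE hmk ⟨p.val, hp1⟩ = p from Fin.ext rfl] at this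
  · by_cases hp2 : p.val = m
    · rw [show p = ⟨m, hm⟩ from Fin.ext hp2]
      exact hval
    · rw [hfix p (by omega), hfix' p (by omega)]

lemma Wmat_formula (h2 : ∀ a b, q a b * q b a = 1) :
    ∀ m : ℕ, m ≤ k →
      Wmat q k m = ∑ σ ∈ Finset.univ.filter
        (fun σ : Equiv.Perm (Fin k) => ∀ p : Fin k, m ≤ p.val → σ p = p), Pm q σ := by
  intro m
  induction m with
  | zero =>
    intro _
    have hfilter : Finset.univ.filter
        (fun σ : Equiv.Perm (Fin k) => ∀ p : Fin k, 0 ≤ p.val → σ p = p) = {1} := by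
      ext σ
      simp only [Finset.mem_filter, Finset.mem_univ, true_and, Finset.mem_singleton]
      constructor
      · intro hfix
        exact Equiv.ext fun p => hfix p (Nat.zero_le _)
      · rintro rfl
        intro p _
        rfl
    rw [hfilter, Finset.sum_singleton, Pm_one]
    rfl
  | succ n ih =>
    intro h
    have hn : n < k := by omega
    rw [show Wmat q k (n + 1) = Ical q k (n + 1) * Wmat q k n from rfl,
      Ical_formula h2 n hn, ih (by omega), Finset.sum_mul]
    have hterm : ∀ σ ∈ Finset.univ.filter (CmP (k := k) n),
        (Pm q σ * ∑ τ ∈ Finset.univ.filter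
          (fun τ : Equiv.Perm (Fin k) => ∀ p : Fin k, n ≤ p.val → τ p = p), Pm q τ)
        = ∑ τ ∈ Finset.univ.filter
          (fun τ : Equiv.Perm (Fin k) => ∀ p : Fin k, n ≤ p.val → τ p = p), Pm q (σ * τ) := by
      intro σ hσ
      simp only [Finset.mem_filter, Finset.mem_univ, true_and] at hσ
      rw [Finset.mul_sum]
      apply Finset.sum_congr rfl
      intro τ hτ
      simp only [Finset.mem_filter, Finset.mem_univ, true_and] at hτ
      exact Pm_mul_Pm n σ τ hτ hσ.2
    rw [Finset.sum_congr rfl hterm, ← Finset.sum_product']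
    apply Finset.sum_nbij'
      (i := fun p : Equiv.Perm (Fin k) × Equiv.Perm (Fin k) => p.1 * p.2)
      (j := fun π : Equiv.Perm (Fin k) =>
        (cpm n (min (π ⟨n, hn⟩).val n) hn (min_le_right _ _),
          (cpm n (min (π ⟨n, hn⟩).val n) hn (min_le_right _ _))⁻¹ * π))
    · intro p hp
      simp only [Finset.mem_product, Finset.mem_filter, Finset.mem_univ, true_and] at hp
      obtain ⟨⟨hfix1, -⟩, hfix2⟩ := hp
      simp only [Finset.mem_filter, Finset.mem_univ, true_and]
      intro x hx
      rw [Equiv.Perm.mul_apply, hfix2 x (by omega), hfix1 x (by omega)]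
    · intro π hπ
      simp only [Finset.mem_filter, Finset.mem_univ, true_and] at hπ
      have hπfix : ∀ p : Fin k, n < p.val → π p = p := fun p hp => hπ p (by omega)
      have hπv : (π ⟨n, hn⟩).val ≤ n := CmP_val_le hπfix ⟨n, hn⟩ (le_refl n)
      have hmin : min (π ⟨n, hn⟩).val n = (π ⟨n, hn⟩).val := min_eq_left hπv
      simp only [Finset.mem_product, Finset.mem_filter, Finset.mem_univ, true_and]
      refine ⟨cpm_CmP hn _, ?_⟩
      intro p hp
      set c := cpm n (min (π ⟨n, hn⟩).val n) hn (min_le_right _ _) with hc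
      have hcinvfix : ∀ x : Fin k, n + 1 ≤ x.val → c⁻¹ x = x :=
        perm_inv_fix (fun x hx => (cpm_CmP hn _).1 x (by omega))
      by_cases hp1 : p.val = n
      · have hcn : c ⟨n, hn⟩ = π ⟨n, hn⟩ := by
          apply Fin.ext
          rw [hc, cpm_at, hmin]
        rw [show p = ⟨n, hn⟩ from Fin.ext hp1, Equiv.Perm.mul_apply, ← hcn,
          Equiv.Perm.inv_apply_self]
      · rw [Equiv.Perm.mul_apply, hπ p (by omega), hcinvfix p (by omega)]
    · intro p hp
      simp only [Finset.mem_product, Finset.mem_filter, Finset.mem_univ, true_and] at hp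
      obtain ⟨⟨hfix1, hmono1⟩, hfix2⟩ := hp
      have hval1 : (p.1 * p.2) ⟨n, hn⟩ = p.1 ⟨n, hn⟩ := by
        rw [Equiv.Perm.mul_apply, hfix2 ⟨n, hn⟩ (le_refl n)]
      have hple : (p.1 ⟨n, hn⟩).val ≤ n := CmP_val_le hfix1 ⟨n, hn⟩ (le_refl n)
      have hmin : min ((p.1 * p.2) ⟨n, hn⟩).val n = (p.1 ⟨n, hn⟩).val := by
        rw [hval1]
        exact min_eq_left hple
      have hceq : cpm n (min ((p.1 * p.2) ⟨n, hn⟩).val n) hn (min_le_right _ _) = p.1 := by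
        apply CmP_unique hn (cpm_CmP hn _) ⟨hfix1, hmono1⟩
        apply Fin.ext
        rw [cpm_at, hmin]
      rw [Prod.ext_iff]
      refine ⟨hceq, ?_⟩
      simp only
      rw [hceq, inv_mul_cancel_left]
    · intro π hπ
      simp only
      rw [mul_inv_cancel_left]
    · intro p hp
      rfl

lemma Wmat_k (h2 : ∀ a b, q a b * q b a = 1) :
    Wmat q k k = ∑ σ : Equiv.Perm (Fin k), Pm q σ := by
  rw [Wmat_formula h2 k (le_refl k)]
  congr 1
  apply Finset.filter_true_of_mem
  intro σ _
  intro p hp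
  exact absurd hp (not_le.mpr p.isLt)

lemma Wmat_k_apply (h2 : ∀ a b, q a b * q b a = 1) (i j : Fin k → Fin N) :
    Wmat q k k i j = ∑ σ : Equiv.Perm (Fin k), (if j = i ∘ ⇑σ then swF q σ i else 0) := by
  rw [Wmat_k h2, Matrix.sum_apply]
  rfl

lemma lam_mul_apply {t : ℕ} (ht : t + 1 < k) (M : Matrix (Fin k → Fin N) (Fin k → Fin N) ℂ)
    (f g : Fin k → Fin N) :
    (lamPos q k t * M) f g
      = q (f ⟨t, Nat.lt_of_succ_lt ht⟩) (f ⟨t + 1, ht⟩)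
        * M (f ∘ ⇑(Equiv.swap (⟨t, Nat.lt_of_succ_lt ht⟩ : Fin k) ⟨t + 1, ht⟩)) g := by
  rw [Matrix.mul_apply]
  simp only [lamPos, ht, ↓reduceDIte]
  rw [Finset.sum_eq_single (f ∘ ⇑(Equiv.swap (⟨t, Nat.lt_of_succ_lt ht⟩ : Fin k) ⟨t + 1, ht⟩))]
  · rw [if_pos rfl]
  · intro h _ hne
    rw [if_neg hne, zero_mul]
  · intro h
    exact absurd (Finset.mem_univ _) h

lemma mul_lam_apply {t : ℕ} (ht : t + 1 < k) (M : Matrix (Fin k → Fin N) (Fin k → Fin N) ℂ)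
    (f g : Fin k → Fin N) :
    (M * lamPos q k t) f g
      = M f (g ∘ ⇑(Equiv.swap (⟨t, Nat.lt_of_succ_lt ht⟩ : Fin k) ⟨t + 1, ht⟩))
        * q (g ⟨t + 1, ht⟩) (g ⟨t, Nat.lt_of_succ_lt ht⟩) := by
  set A : Fin k := ⟨t, Nat.lt_of_succ_lt ht⟩
  set B : Fin k := ⟨t + 1, ht⟩
  have hss : ∀ h : Fin k → Fin N, (h ∘ ⇑(Equiv.swap A B)) ∘ ⇑(Equiv.swap A B) = h := by
    intro h
    funext p
    simp [Equiv.swap_apply_self]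
  rw [Matrix.mul_apply]
  simp only [lamPos, ht, ↓reduceDIte]
  rw [Finset.sum_eq_single (g ∘ ⇑(Equiv.swap A B))]
  · rw [if_pos (hss g).symm]
    simp only [A, B, Function.comp_apply, Equiv.swap_apply_left, Equiv.swap_apply_right]
  · intro h _ hne
    rw [if_neg, mul_zero]
    intro hc
    exact hne (by rw [hc, hss])
  · intro h
    exact absurd (Finset.mem_univ _) h

lemma lam_mul_W (h2 : ∀ a b, q a b * q b a = 1) {t : ℕ} (ht : t + 1 < k) :
    lamPos q k t * Wmat q k k = -Wmat q k k := by
  rw [Wmat_k h2, Matrix.mul_sum,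
    Finset.sum_congr rfl (fun σ _ => lam_mul_Pm h2 ht σ), Finset.sum_neg_distrib]
  congr 1
  exact Fintype.sum_equiv
    (Equiv.mulLeft (Equiv.swap (⟨t, Nat.lt_of_succ_lt ht⟩ : Fin k) ⟨t + 1, ht⟩))
    _ _ (fun σ => rfl)

lemma W_mul_lam (h2 : ∀ a b, q a b * q b a = 1) {t : ℕ} (ht : t + 1 < k) :
    Wmat q k k * lamPos q k t = -Wmat q k k := by
  rw [Wmat_k h2, Matrix.sum_mul,
    Finset.sum_congr rfl (fun σ _ => Pm_mul_lam h2 ht σ), Finset.sum_neg_distrib]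
  congr 1
  exact Fintype.sum_equiv
    (Equiv.mulRight (Equiv.swap (⟨t, Nat.lt_of_succ_lt ht⟩ : Fin k) ⟨t + 1, ht⟩))
    _ _ (fun σ => rfl)

lemma W_row_zero (h1 : ∀ a, q a a = 1) (h2 : ∀ a b, q a b * q b a = 1)
    (i g : Fin k → Fin N) (hi : ¬Function.Injective i) : Wmat q k k i g = 0 := by
  have H : ∀ d : ℕ, ∀ (i g : Fin k → Fin N) (a b : Fin k), a.val < b.val →
      b.val - a.val ≤ d + 1 → i a = i b → Wmat q k k i g = 0 := by
    intro d
    induction d with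
    | zero =>
      intro i g a b hab hd hiab
      have hb : b.val = a.val + 1 := by omega
      have ht : a.val + 1 < k := by rw [← hb]; exact b.isLt
      have hA : (⟨a.val, Nat.lt_of_succ_lt ht⟩ : Fin k) = a := Fin.ext rfl
      have hB : (⟨a.val + 1, ht⟩ : Fin k) = b := Fin.ext hb.symm
      have hseq : i ∘ ⇑(Equiv.swap (⟨a.val, Nat.lt_of_succ_lt ht⟩ : Fin k) ⟨a.val + 1, ht⟩) = i := by
        funext p
        rw [hA, hB]
        simp only [Function.comp_apply, Equiv.swap_apply_def]
        split_ifs with hc1 hc2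
        · rw [hc1, hiab]
        · rw [hc2, hiab]
        · rfl
      have hentry := lam_mul_apply (q := q) ht (Wmat q k k) i g
      rw [lam_mul_W h2 ht] at hentry
      rw [hseq, hA, hB, hiab, h1, one_mul] at hentry
      rw [Matrix.neg_apply] at hentry
      linear_combination (-1/2 : ℂ) * hentry
    | succ d ihd =>
      intro i g a b hab hd hiab
      by_cases hdist : b.val - a.val ≤ d + 1
      · exact ihd i g a b hab hdist hiab
      · have ht : a.val + 1 < k := by
          have := b.isLt
          omega
        have hA : (⟨a.val, Nat.lt_of_succ_lt ht⟩ : Fin k) = a := Fin.ext rfl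
        set A' : Fin k := ⟨a.val + 1, ht⟩ with hA'
        set s := Equiv.swap (⟨a.val, Nat.lt_of_succ_lt ht⟩ : Fin k) A' with hs
        have hentry := lam_mul_apply (q := q) ht (Wmat q k k) i g
        rw [lam_mul_W h2 ht] at hentry
        set i' := i ∘ ⇑s with hi'
        have hi'1 : i' A' = i a := by
          rw [hi', Function.comp_apply, hs, Equiv.swap_apply_right, hA]
        have hi'2 : i' b = i b := by
          rw [hi', Function.comp_apply, hs]
          rw [Equiv.swap_apply_of_ne_of_ne]
          · intro hc
            rw [hc] at hab
            simp at hab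
          · intro hc
            rw [hc] at hdist hab
            simp only [hA'] at hdist hab
            omega
        have hzero : Wmat q k k i' g = 0 := by
          apply ihd i' g A' b
          · simp only [hA']
            omega
          · simp only [hA']
            omega
          · rw [hi'1, hi'2, hiab]
        have hfin : (-Wmat q k k) i g = 0 := by
          rw [hentry, hzero, mul_zero]
        rw [Matrix.neg_apply] at hfin
        exact neg_eq_zero.mp hfin
  obtain ⟨a, b, hne, hiab⟩ : ∃ a b : Fin k, a ≠ b ∧ i a = i b := by
    simp only [Function.Injective, not_forall] at hi
    obtain ⟨a, b, hab, hne⟩ := hi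
    exact ⟨a, b, hne, hab⟩
  rcases Nat.lt_or_ge a.val b.val with h | h
  · exact H (b.val - a.val) i g a b h (by omega) hiab
  · have h' : b.val < a.val := by
      rcases Nat.lt_or_ge b.val a.val with h' | h'
      · exact h'
      · exact absurd (Fin.ext (by omega) : a = b) hne
    exact H (a.val - b.val) i g b a h' (by omega) hiab.symm

lemma W_col_zero (h1 : ∀ a, q a a = 1) (h2 : ∀ a b, q a b * q b a = 1)
    (f g : Fin k → Fin N) (hg : ¬Function.Injective g) : Wmat q k k f g = 0 := by
  have H : ∀ d : ℕ, ∀ (f g : Fin k → Fin N) (a b : Fin k), a.val < b.val →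
      b.val - a.val ≤ d + 1 → g a = g b → Wmat q k k f g = 0 := by
    intro d
    induction d with
    | zero =>
      intro f g a b hab hd hgab
      have hb : b.val = a.val + 1 := by omega
      have ht : a.val + 1 < k := by rw [← hb]; exact b.isLt
      have hA : (⟨a.val, Nat.lt_of_succ_lt ht⟩ : Fin k) = a := Fin.ext rfl
      have hB : (⟨a.val + 1, ht⟩ : Fin k) = b := Fin.ext hb.symm
      have hseq : g ∘ ⇑(Equiv.swap (⟨a.val, Nat.lt_of_succ_lt ht⟩ : Fin k) ⟨a.val + 1, ht⟩) = g := by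
        funext p
        rw [hA, hB]
        simp only [Function.comp_apply, Equiv.swap_apply_def]
        split_ifs with hc1 hc2
        · rw [hc1, hgab]
        · rw [hc2, hgab]
        · rfl
      have hentry := mul_lam_apply (q := q) ht (Wmat q k k) f g
      rw [W_mul_lam h2 ht] at hentry
      rw [hseq, hA, hB, ← hgab, h1, mul_one] at hentry
      rw [Matrix.neg_apply] at hentry
      linear_combination (-1/2 : ℂ) * hentry
    | succ d ihd =>
      intro f g a b hab hd hgab
      by_cases hdist : b.val - a.val ≤ d + 1
      · exact ihd f g a b hab hdist hgab
      · have ht : a.val + 1 < k := by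
          have := b.isLt
          omega
        have hA : (⟨a.val, Nat.lt_of_succ_lt ht⟩ : Fin k) = a := Fin.ext rfl
        set A' : Fin k := ⟨a.val + 1, ht⟩ with hA'
        set s := Equiv.swap (⟨a.val, Nat.lt_of_succ_lt ht⟩ : Fin k) A' with hs
        have hentry := mul_lam_apply (q := q) ht (Wmat q k k) f g
        rw [W_mul_lam h2 ht] at hentry
        set g' := g ∘ ⇑s with hg'
        have hg'1 : g' A' = g a := by
          rw [hg', Function.comp_apply, hs, Equiv.swap_apply_right, hA]
        have hg'2 : g' b = g b := by
          rw [hg', Function.comp_apply, hs]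
          rw [Equiv.swap_apply_of_ne_of_ne]
          · intro hc
            rw [hc] at hab
            simp at hab
          · intro hc
            rw [hc] at hdist hab
            simp only [hA'] at hdist hab
            omega
        have hzero : Wmat q k k f g' = 0 := by
          apply ihd f g' A' b
          · simp only [hA']
            omega
          · simp only [hA']
            omega
          · rw [hg'1, hg'2, hgab]
        have hfin : (-Wmat q k k) f g = 0 := by
          rw [hentry, hzero, zero_mul]
        rw [Matrix.neg_apply] at hfin
        exact neg_eq_zero.mp hfin
  obtain ⟨a, b, hne, hgab⟩ : ∃ a b : Fin k, a ≠ b ∧ g a = g b := by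
    simp only [Function.Injective, not_forall] at hg
    obtain ⟨a, b, hab, hne⟩ := hg
    exact ⟨a, b, hne, hab⟩
  rcases Nat.lt_or_ge a.val b.val with h | h
  · exact H (b.val - a.val) f g a b h (by omega) hgab
  · have h' : b.val < a.val := by
      rcases Nat.lt_or_ge b.val a.val with h' | h'
      · exact h'
      · exact absurd (Fin.ext (by omega) : a = b) hne
    exact H (a.val - b.val) f g b a h' (by omega) hgab.symm

section EpsSide

variable {m : ℕ}

lemma append_cast_val (u : Fin k → Fin N) (l : Fin m → Fin N) (h : N = k + m) (t : Fin N) :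
    Fin.append u l (Fin.cast h t)
      = if hlt : t.val < k then u ⟨t.val, hlt⟩ else l ⟨t.val - k, by have := t.isLt; omega⟩ := by
  by_cases hlt : t.val < k
  · rw [dif_pos hlt]
    have hc : Fin.cast h t = Fin.castAdd m ⟨t.val, hlt⟩ := Fin.ext rfl
    rw [hc, Fin.append_left]
  · rw [dif_neg hlt]
    have hc : Fin.cast h t = Fin.natAdd k ⟨t.val - k, by have := t.isLt; omega⟩ := by
      apply Fin.ext
      simp only [Fin.coe_cast, Fin.coe_natAdd]
      omega
    rw [hc, Fin.append_right]

lemma appendF_inj (u : Fin k → Fin N) (l : Fin m → Fin N) (h : N = k + m)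
    (hu : Function.Injective u) (hl : Function.Injective l)
    (hd : ∀ (b : Fin m) (a : Fin k), l b ≠ u a) :
    Function.Injective (fun t : Fin N => Fin.append u l (Fin.cast h t)) := by
  intro t1 t2 heq
  simp only [append_cast_val u l h] at heq
  split_ifs at heq with c1 c2 c2
  · have h4 := hu heq
    simp only [Fin.mk.injEq] at h4
    exact Fin.ext h4
  · exact absurd heq.symm (hd _ _)
  · exact absurd heq (hd _ _)
  · have h4 := hl heq
    simp only [Fin.mk.injEq] at h4
    apply Fin.ext
    have ht1 := t1.isLt
    have ht2 := t2.isLt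
    omega

lemma appendF_inj_parts (u : Fin k → Fin N) (l : Fin m → Fin N) (h : N = k + m)
    (hinj : Function.Injective (fun t : Fin N => Fin.append u l (Fin.cast h t))) :
    Function.Injective u ∧ Function.Injective l ∧ ∀ (b : Fin m) (a : Fin k), l b ≠ u a := by
  have hval : ∀ t : Fin N, Fin.append u l (Fin.cast h t)
      = if hlt : t.val < k then u ⟨t.val, hlt⟩ else l ⟨t.val - k, by have := t.isLt; omega⟩ :=
    append_cast_val u l h
  refine ⟨?_, ?_, ?_⟩
  · intro a a' heq
    have hk1 : (a : ℕ) < N := by omega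
    have hk2 : (a' : ℕ) < N := by omega
    have h1 : Fin.append u l (Fin.cast h ⟨a.val, hk1⟩) = u a := by
      rw [hval]
      rw [dif_pos a.isLt]
    have h2 : Fin.append u l (Fin.cast h ⟨a'.val, hk2⟩) = u a' := by
      rw [hval]
      rw [dif_pos a'.isLt]
    have := hinj (show (fun t : Fin N => Fin.append u l (Fin.cast h t)) ⟨a.val, hk1⟩
        = (fun t : Fin N => Fin.append u l (Fin.cast h t)) ⟨a'.val, hk2⟩ by
      simp only [h1, h2, heq])
    simp only [Fin.mk.injEq] at this
    exact Fin.ext this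
  · intro b b' heq
    have hk1 : k + (b : ℕ) < N := by have := b.isLt; omega
    have hk2 : k + (b' : ℕ) < N := by have := b'.isLt; omega
    have h1 : Fin.append u l (Fin.cast h ⟨k + b.val, hk1⟩) = l b := by
      rw [hval, dif_neg (show ¬(k + (b : ℕ) < k) by omega)]
      congr 1
      apply Fin.ext
      show k + (b : ℕ) - k = (b : ℕ)
      omega
    have h2 : Fin.append u l (Fin.cast h ⟨k + b'.val, hk2⟩) = l b' := by
      rw [hval, dif_neg (show ¬(k + (b' : ℕ) < k) by omega)]
      congr 1
      apply Fin.ext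
      show k + (b' : ℕ) - k = (b' : ℕ)
      omega
    have := hinj (show (fun t : Fin N => Fin.append u l (Fin.cast h t)) ⟨k + b.val, hk1⟩
        = (fun t : Fin N => Fin.append u l (Fin.cast h t)) ⟨k + b'.val, hk2⟩ by
      simp only [h1, h2, heq])
    simp only [Fin.mk.injEq] at this
    apply Fin.ext
    omega
  · intro b a heq
    have hk1 : k + (b : ℕ) < N := by have := b.isLt; omega
    have hk2 : (a : ℕ) < N := by omega
    have h1 : Fin.append u l (Fin.cast h ⟨k + b.val, hk1⟩) = l b := by
      rw [hval, dif_neg (show ¬(k + (b : ℕ) < k) by omega)]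
      congr 1
      apply Fin.ext
      show k + (b : ℕ) - k = (b : ℕ)
      omega
    have h2 : Fin.append u l (Fin.cast h ⟨a.val, hk2⟩) = u a := by
      rw [hval, dif_pos a.isLt]
    have := hinj (show (fun t : Fin N => Fin.append u l (Fin.cast h t)) ⟨k + b.val, hk1⟩
        = (fun t : Fin N => Fin.append u l (Fin.cast h t)) ⟨a.val, hk2⟩ by
      simp only [h1, h2, heq])
    simp only [Fin.mk.injEq] at this
    omega

lemma epsQ_decomp (Q : Fin N → Fin N → ℂ) (u : Fin k → Fin N) (l : Fin m → Fin N)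
    (h : N = k + m)
    (hinj : Function.Injective (fun t : Fin N => Fin.append u l (Fin.cast h t))) :
    epsQ Q (fun t => Fin.append u l (Fin.cast h t)) =
      ((∏ p : Fin k × Fin k, if p.1 < p.2 ∧ u p.2 < u p.1 then -Q (u p.1) (u p.2) else 1)
        * ∏ p : Fin k × Fin m, if l p.2 < u p.1 then -Q (u p.1) (l p.2) else 1)
        * ∏ p : Fin m × Fin m, if p.1 < p.2 ∧ l p.2 < l p.1 then -Q (l p.1) (l p.2) else 1 := by
  set f : Fin N → Fin N := fun t => Fin.append u l (Fin.cast h t) with hf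
  rw [epsQ, if_pos hinj, Finset.prod_filter]
  set e0 : Fin k ⊕ Fin m ≃ Fin N := finSumFinEquiv.trans (finCongr h.symm) with he0
  have hvall : ∀ a : Fin k, (e0 (Sum.inl a)).val = a.val := by
    intro a
    simp [he0]
  have hvalr : ∀ b : Fin m, (e0 (Sum.inr b)).val = k + b.val := by
    intro b
    simp [he0]
  have hvl : ∀ a : Fin k, f (e0 (Sum.inl a)) = u a := by
    intro a
    rw [hf]
    simp only
    rw [append_cast_val u l h, dif_pos (by rw [hvall]; exact a.isLt)]
    exact congrArg u (Fin.ext (hvall a))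
  have hvr : ∀ b : Fin m, f (e0 (Sum.inr b)) = l b := by
    intro b
    rw [hf]
    simp only
    rw [append_cast_val u l h, dif_neg (by rw [hvalr]; omega)]
    refine congrArg l (Fin.ext ?_)
    show (e0 (Sum.inr b)).val - k = (b : ℕ)
    rw [hvalr]
    omega
  set E : Fin N × Fin N → ℂ :=
    fun p => if p.1 < p.2 ∧ f p.2 < f p.1 then -Q (f p.1) (f p.2) else 1 with hE
  have hEapp : ∀ p : Fin N × Fin N,
      E p = if p.1 < p.2 ∧ f p.2 < f p.1 then -Q (f p.1) (f p.2) else 1 := fun p => rfl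
  have step1 : ∏ p : Fin N × Fin N, E p
      = ∏ x : (Fin k ⊕ Fin m) × (Fin k ⊕ Fin m), E (e0 x.1, e0 x.2) := by
    exact (Fintype.prod_equiv (Equiv.prodCongr e0 e0)
      (fun x => E (e0 x.1, e0 x.2)) E (fun x => rfl)).symm
  have step2 : ∏ x : (Fin k ⊕ Fin m) × (Fin k ⊕ Fin m), E (e0 x.1, e0 x.2)
      = ∏ x1 : Fin k ⊕ Fin m, ∏ x2 : Fin k ⊕ Fin m, E (e0 x1, e0 x2) :=
    Fintype.prod_prod_type _
  have step3 : ∏ x1 : Fin k ⊕ Fin m, ∏ x2 : Fin k ⊕ Fin m, E (e0 x1, e0 x2)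
      = (∏ a : Fin k, ∏ x2 : Fin k ⊕ Fin m, E (e0 (Sum.inl a), e0 x2))
        * ∏ b : Fin m, ∏ x2 : Fin k ⊕ Fin m, E (e0 (Sum.inr b), e0 x2) :=
    Fintype.prod_sum_type _
  have inner : ∀ x1 : Fin k ⊕ Fin m, ∏ x2 : Fin k ⊕ Fin m, E (e0 x1, e0 x2)
      = (∏ a' : Fin k, E (e0 x1, e0 (Sum.inl a'))) * ∏ b' : Fin m, E (e0 x1, e0 (Sum.inr b')) :=
    fun x1 => Fintype.prod_sum_type _
  have hltll : ∀ (a a' : Fin k), (e0 (Sum.inl a) < e0 (Sum.inl a') ↔ a < a') := by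
    intro a a'
    rw [Fin.lt_def, Fin.lt_def, hvall, hvall]
  have hltlr : ∀ (a : Fin k) (b : Fin m), e0 (Sum.inl a) < e0 (Sum.inr b) := by
    intro a b
    rw [Fin.lt_def, hvall, hvalr]
    have := a.isLt
    omega
  have hltrr : ∀ (b b' : Fin m), (e0 (Sum.inr b) < e0 (Sum.inr b') ↔ b < b') := by
    intro b b'
    rw [Fin.lt_def, Fin.lt_def, hvalr, hvalr]
    omega
  have hkk : ∀ (a a' : Fin k), E (e0 (Sum.inl a), e0 (Sum.inl a'))
      = if a < a' ∧ u a' < u a then -Q (u a) (u a') else 1 := by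
    intro a a'
    rw [hEapp]
    exact if_congr (and_congr (hltll a a') (by rw [hvl, hvl])) (by rw [hvl, hvl]) rfl
  have hkm : ∀ (a : Fin k) (b' : Fin m), E (e0 (Sum.inl a), e0 (Sum.inr b'))
      = if l b' < u a then -Q (u a) (l b') else 1 := by
    intro a b'
    rw [hEapp]
    refine if_congr ?_ (by rw [hvl, hvr]) rfl
    constructor
    · rintro ⟨-, hh⟩
      rwa [hvl, hvr] at hh
    · intro hh
      exact ⟨hltlr a b', by rwa [hvl, hvr]⟩
  have hmk : ∀ (b : Fin m) (a' : Fin k), E (e0 (Sum.inr b), e0 (Sum.inl a')) = 1 := by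
    intro b a'
    rw [hEapp, if_neg]
    rintro ⟨hc, -⟩
    rw [Fin.lt_def, hvall, hvalr] at hc
    omega
  have hmm : ∀ (b b' : Fin m), E (e0 (Sum.inr b), e0 (Sum.inr b'))
      = if b < b' ∧ l b' < l b then -Q (l b) (l b') else 1 := by
    intro b b'
    rw [hEapp]
    exact if_congr (and_congr (hltrr b b') (by rw [hvr, hvr])) (by rw [hvr, hvr]) rfl
  rw [show (∏ p : Fin N × Fin N, if p.1 < p.2 ∧ f p.2 < f p.1 then -Q (f p.1) (f p.2) else 1)
      = ∏ p : Fin N × Fin N, E p from rfl, step1, step2, step3]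
  rw [Finset.prod_congr rfl (fun a _ => inner (Sum.inl a)),
      Finset.prod_congr rfl (fun b _ => inner (Sum.inr b))]
  rw [Finset.prod_mul_distrib, Finset.prod_mul_distrib]
  have t1 : ∏ a : Fin k, ∏ a' : Fin k, E (e0 (Sum.inl a), e0 (Sum.inl a'))
      = ∏ p : Fin k × Fin k, if p.1 < p.2 ∧ u p.2 < u p.1 then -Q (u p.1) (u p.2) else 1 := by
    rw [Fintype.prod_prod_type]
    exact Finset.prod_congr rfl fun a _ => Finset.prod_congr rfl fun a' _ => hkk a a'
  have t2 : ∏ a : Fin k, ∏ b' : Fin m, E (e0 (Sum.inl a), e0 (Sum.inr b'))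
      = ∏ p : Fin k × Fin m, if l p.2 < u p.1 then -Q (u p.1) (l p.2) else 1 := by
    rw [Fintype.prod_prod_type]
    exact Finset.prod_congr rfl fun a _ => Finset.prod_congr rfl fun b' _ => hkm a b'
  have t3 : ∏ b : Fin m, ∏ a' : Fin k, E (e0 (Sum.inr b), e0 (Sum.inl a')) = 1 := by
    apply Finset.prod_eq_one
    intro b _
    apply Finset.prod_eq_one
    intro a' _
    exact hmk b a'
  have t4 : ∏ b : Fin m, ∏ b' : Fin m, E (e0 (Sum.inr b), e0 (Sum.inr b'))
      = ∏ p : Fin m × Fin m, if p.1 < p.2 ∧ l p.2 < l p.1 then -Q (l p.1) (l p.2) else 1 := by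
    rw [Fintype.prod_prod_type]
    exact Finset.prod_congr rfl fun b _ => Finset.prod_congr rfl fun b' _ => hmm b b'
  rw [t1, t2, t3, t4, one_mul]

end EpsSide

lemma prod_pairs_eq (L R : Fin k × Fin k → ℂ)
    (hdL : ∀ p : Fin k × Fin k, p.1 = p.2 → L p = 1)
    (hdR : ∀ p : Fin k × Fin k, p.1 = p.2 → R p = 1)
    (hp : ∀ p : Fin k × Fin k, p.1 < p.2 → L p * L p.swap = R p * R p.swap) :
    ∏ p, L p = ∏ p, R p := by
  have key : ∀ (F : Fin k × Fin k → ℂ), (∀ p : Fin k × Fin k, p.1 = p.2 → F p = 1) →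
      ∏ p, F p = ∏ p ∈ Finset.univ.filter (fun p : Fin k × Fin k => p.1 < p.2),
        (F p * F p.swap) := by
    intro F hd
    rw [← Finset.prod_filter_mul_prod_filter_not Finset.univ
      (fun p : Fin k × Fin k => p.1 < p.2) F]
    rw [← Finset.prod_filter_mul_prod_filter_not
      (Finset.univ.filter (fun p : Fin k × Fin k => ¬p.1 < p.2))
      (fun p : Fin k × Fin k => p.2 < p.1) F]
    have hdiag : ∏ p ∈ ((Finset.univ.filter fun p : Fin k × Fin k => ¬p.1 < p.2).filter
        fun p : Fin k × Fin k => ¬p.2 < p.1), F p = 1 := by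
      apply Finset.prod_eq_one
      intro p hp'
      simp only [Finset.mem_filter, Finset.mem_univ, true_and] at hp'
      exact hd p (le_antisymm (not_lt.mp hp'.2) (not_lt.mp hp'.1))
    have hlow : ∏ p ∈ ((Finset.univ.filter fun p : Fin k × Fin k => ¬p.1 < p.2).filter
        fun p : Fin k × Fin k => p.2 < p.1), F p
        = ∏ p ∈ Finset.univ.filter (fun p : Fin k × Fin k => p.1 < p.2), F p.swap := by
      apply Finset.prod_nbij' Prod.swap Prod.swap
      · intro p hp'
        simp only [Finset.mem_filter, Finset.mem_univ, true_and] at hp' ⊢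
        exact hp'.2
      · intro p hp'
        simp only [Finset.mem_filter, Finset.mem_univ, true_and] at hp' ⊢
        exact ⟨asymm hp', hp'⟩
      · intro p _
        rfl
      · intro p _
        rfl
      · intro p _
        rfl
    rw [hdiag, mul_one, hlow, ← Finset.prod_mul_distrib]
  rw [key L hdL, key R hdR]
  exact Finset.prod_congr rfl fun p hp' => hp p (by
    simpa only [Finset.mem_filter, Finset.mem_univ, true_and] using hp')

lemma crux (h1 : ∀ a, q a a = 1) (h2 : ∀ a b, q a b * q b a = 1) {m : ℕ} (h : N = k + m)
    (i : Fin k → Fin N) (l : Fin m → Fin N) (σ0 : Equiv.Perm (Fin k))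
    (hi : Function.Injective i) (hl : Function.Injective l)
    (hd : ∀ (b : Fin m) (a : Fin k), l b ≠ i a) :
    epsQ q (fun t => Fin.append i l (Fin.cast h t))
      * epsQ (fun a b => (q a b)⁻¹) (fun t => Fin.append (i ∘ ⇑σ0) l (Fin.cast h t))
      = swF q σ0 i := by
  set j : Fin k → Fin N := i ∘ ⇑σ0 with hjdef
  have hjv : ∀ a, j a = i (σ0 a) := fun a => rfl
  have hj : Function.Injective j := hi.comp σ0.injective
  have hdj : ∀ (b : Fin m) (a : Fin k), l b ≠ j a := fun b a => hd b (σ0 a)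
  have hinj1 := appendF_inj i l h hi hl hd
  have hinj2 := appendF_inj j l h hj hl hdj
  rw [epsQ_decomp q i l h hinj1, epsQ_decomp _ j l h hinj2]
  set A1 : ℂ := ∏ p : Fin k × Fin k,
    if p.1 < p.2 ∧ i p.2 < i p.1 then -q (i p.1) (i p.2) else 1 with hA1
  set A2 : ℂ := ∏ p : Fin k × Fin m,
    if l p.2 < i p.1 then -q (i p.1) (l p.2) else 1 with hA2
  set A3 : ℂ := ∏ p : Fin m × Fin m,
    if p.1 < p.2 ∧ l p.2 < l p.1 then -q (l p.1) (l p.2) else 1 with hA3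
  set B1 : ℂ := ∏ p : Fin k × Fin k,
    if p.1 < p.2 ∧ j p.2 < j p.1 then -(fun a b => (q a b)⁻¹) (j p.1) (j p.2) else 1 with hB1
  set B2 : ℂ := ∏ p : Fin k × Fin m,
    if l p.2 < j p.1 then -(fun a b => (q a b)⁻¹) (j p.1) (l p.2) else 1 with hB2
  set B3 : ℂ := ∏ p : Fin m × Fin m,
    if p.1 < p.2 ∧ l p.2 < l p.1 then -(fun a b => (q a b)⁻¹) (l p.1) (l p.2) else 1 with hB3
  have hc3 : A3 * B3 = 1 := by
    rw [hA3, hB3, ← Finset.prod_mul_distrib]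
    apply Finset.prod_eq_one
    intro p _
    by_cases hc : p.1 < p.2 ∧ l p.2 < l p.1
    · rw [if_pos hc, if_pos hc]
      simp only
      rw [neg_mul_neg, mul_inv_cancel₀ (qne h2 _ _)]
    · rw [if_neg hc, if_neg hc, one_mul]
  have hB2' : B2 = ∏ p : Fin k × Fin m,
      if l p.2 < i p.1 then -(q (i p.1) (l p.2))⁻¹ else 1 := by
    rw [hB2]
    refine (Fintype.prod_equiv (Equiv.prodCongr σ0⁻¹ (Equiv.refl (Fin m)))
      (fun p => if l p.2 < i p.1 then -(q (i p.1) (l p.2))⁻¹ else 1) _ ?_).symm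
    intro p
    simp only [Equiv.prodCongr_apply, Equiv.coe_refl, Prod.map, id_eq, hjv,
      Equiv.Perm.apply_inv_self]
  have hc2 : A2 * B2 = 1 := by
    rw [hB2', hA2, ← Finset.prod_mul_distrib]
    apply Finset.prod_eq_one
    intro p _
    by_cases hc : l p.2 < i p.1
    · rw [if_pos hc, if_pos hc, neg_mul_neg, mul_inv_cancel₀ (qne h2 _ _)]
    · rw [if_neg hc, if_neg hc, one_mul]
  have hB1' : B1 = ∏ p : Fin k × Fin k,
      if σ0⁻¹ p.2 < σ0⁻¹ p.1 ∧ i p.1 < i p.2 then -q (i p.1) (i p.2) else 1 := by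
    rw [hB1]
    have step1 : ∀ p : Fin k × Fin k,
        (if p.1 < p.2 ∧ j p.2 < j p.1 then -(fun a b => (q a b)⁻¹) (j p.1) (j p.2) else 1)
        = (if p.1 < p.2 ∧ j p.2 < j p.1 then -q (j p.2) (j p.1) else 1) := by
      intro p
      by_cases hc : p.1 < p.2 ∧ j p.2 < j p.1
      · rw [if_pos hc, if_pos hc]
        simp only
        rw [qinv h2]
      · rw [if_neg hc, if_neg hc]
    rw [Finset.prod_congr rfl (fun p _ => step1 p)]
    refine Fintype.prod_equiv ((Equiv.prodCongr σ0 σ0).trans (Equiv.prodComm _ _))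
      _ (fun p => if σ0⁻¹ p.2 < σ0⁻¹ p.1 ∧ i p.1 < i p.2 then -q (i p.1) (i p.2) else 1) ?_
    intro p
    simp only [Equiv.trans_apply, Equiv.prodCongr_apply, Equiv.prodComm_apply, Prod.map,
      Prod.swap, hjv, Equiv.Perm.inv_apply_self]
  have hc1 : A1 * B1 = swF q σ0 i := by
    rw [hB1', hA1, ← Finset.prod_mul_distrib,
      show swF q σ0 i = ∏ p : Fin k × Fin k,
        (if p.1 < p.2 ∧ σ0⁻¹ p.2 < σ0⁻¹ p.1 then -q (i p.1) (i p.2) else 1) from rfl]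
    apply prod_pairs_eq
    · intro p hpd
      rw [if_neg, if_neg, one_mul]
      · rintro ⟨-, hc⟩
        rw [hpd] at hc
        exact lt_irrefl _ hc
      · rintro ⟨hc, -⟩
        rw [hpd] at hc
        exact lt_irrefl _ hc
    · intro p hpd
      rw [if_neg]
      rintro ⟨hc, -⟩
      rw [hpd] at hc
      exact lt_irrefl _ hc
    · intro p hplt
      have hpne : p.1 ≠ p.2 := ne_of_lt hplt
      have hine : i p.1 ≠ i p.2 := fun hc => hpne (hi hc)
      have hsne : σ0⁻¹ p.1 ≠ σ0⁻¹ p.2 := fun hc => hpne (σ0⁻¹.injective hc)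
      have hswne : ¬ p.2 < p.1 := asymm hplt
      simp only [Prod.fst_swap, Prod.snd_swap]
      by_cases hs : σ0⁻¹ p.2 < σ0⁻¹ p.1 <;> by_cases ho : i p.2 < i p.1
      · rw [if_pos (show p.1 < p.2 ∧ i p.2 < i p.1 from ⟨hplt, ho⟩),
          if_neg (show ¬(σ0⁻¹ p.2 < σ0⁻¹ p.1 ∧ i p.1 < i p.2) from fun hc => (asymm ho) hc.2),
          if_neg (show ¬(p.2 < p.1 ∧ i p.1 < i p.2) from fun hc => hswne hc.1),
          if_neg (show ¬(σ0⁻¹ p.1 < σ0⁻¹ p.2 ∧ i p.2 < i p.1) from fun hc => (asymm hs) hc.1),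
          if_pos (show p.1 < p.2 ∧ σ0⁻¹ p.2 < σ0⁻¹ p.1 from ⟨hplt, hs⟩),
          if_neg (show ¬(p.2 < p.1 ∧ σ0⁻¹ p.1 < σ0⁻¹ p.2) from fun hc => hswne hc.1)]
        ring
      · have ho' : i p.1 < i p.2 := lt_of_le_of_ne (not_lt.mp ho) hine
        rw [if_neg (show ¬(p.1 < p.2 ∧ i p.2 < i p.1) from fun hc => ho hc.2),
          if_pos (show σ0⁻¹ p.2 < σ0⁻¹ p.1 ∧ i p.1 < i p.2 from ⟨hs, ho'⟩),
          if_neg (show ¬(p.2 < p.1 ∧ i p.1 < i p.2) from fun hc => hswne hc.1),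
          if_neg (show ¬(σ0⁻¹ p.1 < σ0⁻¹ p.2 ∧ i p.2 < i p.1) from fun hc => (asymm hs) hc.1),
          if_pos (show p.1 < p.2 ∧ σ0⁻¹ p.2 < σ0⁻¹ p.1 from ⟨hplt, hs⟩),
          if_neg (show ¬(p.2 < p.1 ∧ σ0⁻¹ p.1 < σ0⁻¹ p.2) from fun hc => hswne hc.1)]
        ring
      · have hs' : σ0⁻¹ p.1 < σ0⁻¹ p.2 := lt_of_le_of_ne (not_lt.mp hs) hsne
        rw [if_pos (show p.1 < p.2 ∧ i p.2 < i p.1 from ⟨hplt, ho⟩),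
          if_neg (show ¬(σ0⁻¹ p.2 < σ0⁻¹ p.1 ∧ i p.1 < i p.2) from fun hc => hs hc.1),
          if_neg (show ¬(p.2 < p.1 ∧ i p.1 < i p.2) from fun hc => hswne hc.1),
          if_pos (show σ0⁻¹ p.1 < σ0⁻¹ p.2 ∧ i p.2 < i p.1 from ⟨hs', ho⟩),
          if_neg (show ¬(p.1 < p.2 ∧ σ0⁻¹ p.2 < σ0⁻¹ p.1) from fun hc => hs hc.2),
          if_neg (show ¬(p.2 < p.1 ∧ σ0⁻¹ p.1 < σ0⁻¹ p.2) from fun hc => hswne hc.1)]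
        linear_combination (1 - q (i p.1) (i p.2) * q (i p.2) (i p.1)) +
          h2 (i p.1) (i p.2)
      · rw [if_neg (show ¬(p.1 < p.2 ∧ i p.2 < i p.1) from fun hc => ho hc.2),
          if_neg (show ¬(σ0⁻¹ p.2 < σ0⁻¹ p.1 ∧ i p.1 < i p.2) from fun hc => hs hc.1),
          if_neg (show ¬(p.2 < p.1 ∧ i p.1 < i p.2) from fun hc => hswne hc.1),
          if_neg (show ¬(σ0⁻¹ p.1 < σ0⁻¹ p.2 ∧ i p.2 < i p.1) from fun hc => ho hc.2),
          if_neg (show ¬(p.1 < p.2 ∧ σ0⁻¹ p.2 < σ0⁻¹ p.1) from fun hc => hs hc.2),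
          if_neg (show ¬(p.2 < p.1 ∧ σ0⁻¹ p.1 < σ0⁻¹ p.2) from fun hc => hswne hc.1)]
        ring
  calc A1 * A2 * A3 * (B1 * B2 * B3) = (A1 * B1) * ((A2 * B2) * (A3 * B3)) := by ring
    _ = swF q σ0 i := by rw [hc1, hc2, hc3, one_mul, mul_one]

end EpsContractionProof

/-- epsilon contraction formula:
`Σ_{l_{k+1},...,l_N} ε_q^{i_1...i_k l_{k+1}...l_N} ε_{q^{-1}}_{j_1...j_k l_{k+1}...l_N}
 = (N−k)! · W^{i_1...i_k}_{j_1...j_k}`. -/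
theorem eps_contraction {N : ℕ} (q : Fin N → Fin N → ℂ)
    (h1 : ∀ a, q a a = 1)
    (h2 : ∀ a b, q a b * q b a = 1)
    (h3 : ∀ a b, q a b * q a (Fin.rev b) = 1)
    (h4 : ∀ a b, q a b = q (Fin.rev a) (Fin.rev b)) :
    ∀ (k : ℕ) (hk : k ≤ N) (i j : Fin k → Fin N),
      ∑ l : Fin (N - k) → Fin N,
        epsQ q (fun t => Fin.append i l (Fin.cast (by omega) t)) *
          epsQ (fun a b => (q a b)⁻¹) (fun t => Fin.append j l (Fin.cast (by omega) t))
        = ((N - k).factorial : ℂ) * Wmat q k k i j := by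
  intro k hk i j
  have pf : N = k + (N - k) := by omega
  by_cases hi : Function.Injective i
  · by_cases hj : Function.Injective j
    · by_cases hr : Set.range i = Set.range j
      · -- ranges equal: build σ0
        have hmemj : ∀ p : Fin k, j p ∈ Set.range i := by
          intro p
          rw [hr]
          exact ⟨p, rfl⟩
        set σ0fun : Fin k → Fin k :=
          fun p => (Equiv.ofInjective i hi).symm ⟨j p, hmemj p⟩ with hσ0fun
        have hiσ : ∀ p, i (σ0fun p) = j p := by
          intro p
          rw [hσ0fun]
          exact Equiv.apply_ofInjective_symm hi _
        have hσinj : Function.Injective σ0fun := by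
          intro p p' hc
          apply hj
          rw [← hiσ, ← hiσ, hc]
        set σ0 : Equiv.Perm (Fin k) :=
          Equiv.ofBijective σ0fun (Finite.injective_iff_bijective.mp hσinj) with hσ0
        have hσ0app : ∀ p, σ0 p = σ0fun p := fun p => rfl
        have hjσ : j = i ∘ ⇑σ0 := by
          funext p
          rw [Function.comp_apply, hσ0app, hiσ]
        have hW : Wmat q k k i j = swF q σ0 i := by
          rw [Wmat_k_apply h2, Finset.sum_eq_single σ0]
          · rw [if_pos hjσ]
          · intro σ _ hne
            rw [if_neg]
            intro hc
            apply hne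
            apply Equiv.ext
            intro p
            apply hi
            have hcc := congrFun (hc.symm.trans hjσ) p
            exact hcc
          · intro hmem
            exact absurd (Finset.mem_univ σ0) hmem
        have hterm : ∀ l : Fin (N - k) → Fin N,
            epsQ q (fun t => Fin.append i l (Fin.cast pf t)) *
              epsQ (fun a b => (q a b)⁻¹) (fun t => Fin.append j l (Fin.cast pf t))
            = if Function.Injective l ∧ ∀ (b : Fin (N - k)) (a : Fin k), l b ≠ i a
              then swF q σ0 i else 0 := by
          intro l
          by_cases hg : Function.Injective l ∧ ∀ (b : Fin (N - k)) (a : Fin k), l b ≠ i a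
          · rw [if_pos hg, hjσ]
            exact crux h1 h2 pf i l σ0 hi hg.1 hg.2
          · rw [if_neg hg]
            have hni : ¬Function.Injective (fun t : Fin N => Fin.append i l (Fin.cast pf t)) := by
              intro hc
              obtain ⟨-, h2', h3'⟩ := appendF_inj_parts i l pf hc
              exact hg ⟨h2', h3'⟩
            rw [epsQ, if_neg hni, zero_mul]
        rw [Finset.sum_congr rfl (fun l _ => hterm l), ← Finset.sum_filter,
          Finset.sum_const, nsmul_eq_mul, hW]
        congr 1
        have hcard : (Finset.univ.filter
            (fun l : Fin (N - k) → Fin N =>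
              Function.Injective l ∧ ∀ (b : Fin (N - k)) (a : Fin k), l b ≠ i a)).card
            = (N - k).factorial := by
          rw [← Fintype.card_subtype]
          have e : {l : Fin (N - k) → Fin N //
              Function.Injective l ∧ ∀ (b : Fin (N - k)) (a : Fin k), l b ≠ i a}
              ≃ (Fin (N - k) ↪ {x : Fin N // ∀ a : Fin k, x ≠ i a}) := by
            refine ⟨fun l => ⟨fun b => ⟨l.1 b, fun a => l.2.2 b a⟩,
                fun b b' hbb => l.2.1 (congrArg Subtype.val hbb)⟩,
              fun φ => ⟨fun b => (φ b).1,
                ⟨fun b b' hbb => φ.injective (Subtype.ext hbb), fun b a => (φ b).2 a⟩⟩,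
              fun l => Subtype.ext (funext fun b => rfl),
              fun φ => ?_⟩
            apply DFunLike.ext
            intro b
            rfl
          rw [Fintype.card_congr e, Fintype.card_embedding_eq]
          have hcs : Fintype.card {x : Fin N // ∀ a : Fin k, x ≠ i a} = N - k := by
            rw [Fintype.card_subtype]
            have hset : Finset.univ.filter (fun x : Fin N => ∀ a : Fin k, x ≠ i a)
                = Finset.univ \ Finset.image i Finset.univ := by
              ext x
              simp only [Finset.mem_filter, Finset.mem_univ, true_and, Finset.mem_sdiff,
                Finset.mem_image, not_exists]
              constructor
              · intro hx a hc
                exact hx a hc.symm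
              · intro hx a hc
                exact hx a hc.symm
            rw [hset, Finset.card_sdiff_of_subset (Finset.subset_univ _),
              Finset.card_image_of_injective _ hi, Finset.card_fin, Finset.card_univ,
              Fintype.card_fin]
          rw [hcs, Fintype.card_fin, Nat.descFactorial_self]
        rw [hcard]
      · -- ranges differ
        have hW : Wmat q k k i j = 0 := by
          rw [Wmat_k_apply h2]
          apply Finset.sum_eq_zero
          intro σ _
          rw [if_neg]
          intro hc
          apply hr
          have : Set.range j = Set.range i := by
            rw [hc, Set.range_comp, σ.surjective.range_eq, Set.image_univ]
          exact this.symm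
        rw [hW, mul_zero]
        apply Finset.sum_eq_zero
        intro l _
        by_contra hne
        have hA : epsQ q (fun t => Fin.append i l (Fin.cast pf t)) ≠ 0 := by
          intro hz
          exact hne (by rw [show (fun t : Fin N => Fin.append i l (Fin.cast pf t))
            = fun t : Fin N => Fin.append i l (Fin.cast pf t) from rfl] at hz ⊢; rw [hz, zero_mul])
        have hB : epsQ (fun a b => (q a b)⁻¹)
            (fun t => Fin.append j l (Fin.cast pf t)) ≠ 0 := by
          intro hz
          exact hne (by rw [hz, mul_zero])
        have hinj1 : Function.Injective (fun t : Fin N => Fin.append i l (Fin.cast pf t)) := by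
          by_contra hc
          exact hA (by rw [epsQ, if_neg hc])
        have hinj2 : Function.Injective (fun t : Fin N => Fin.append j l (Fin.cast pf t)) := by
          by_contra hc
          exact hB (by rw [epsQ, if_neg hc])
        obtain ⟨-, hlinj, hdisi⟩ := appendF_inj_parts i l pf hinj1
        obtain ⟨-, -, hdisj⟩ := appendF_inj_parts j l pf hinj2
        have hsub : ∀ (u : Fin k → Fin N),
            Function.Injective (fun t : Fin N => Fin.append u l (Fin.cast pf t)) →
            ∀ x : Fin N, (∀ a, x ≠ u a) → ∃ b, l b = x := by
          intro u hinj x hx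
          have hsurj : Function.Surjective (fun t : Fin N => Fin.append u l (Fin.cast pf t)) :=
            Finite.injective_iff_surjective.mp hinj
          obtain ⟨t, ht⟩ := hsurj x
          simp only at ht
          rw [append_cast_val u l pf t] at ht
          by_cases hlt : t.val < k
          · rw [dif_pos hlt] at ht
            exact absurd ht.symm (hx _)
          · rw [dif_neg hlt] at ht
            exact ⟨_, ht⟩
        apply hr
        apply Set.Subset.antisymm
        · rintro x ⟨a, rfl⟩
          by_contra hxj
          have hxj' : ∀ a', i a ≠ j a' := by
            intro a' hc
            exact hxj ⟨a', hc.symm⟩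
          obtain ⟨b, hb⟩ := hsub j hinj2 (i a) hxj'
          exact hdisi b a hb
        · rintro x ⟨a, rfl⟩
          by_contra hxi
          have hxi' : ∀ a', j a ≠ i a' := by
            intro a' hc
            exact hxi ⟨a', hc.symm⟩
          obtain ⟨b, hb⟩ := hsub i hinj1 (j a) hxi'
          exact hdisj b a hb
    · rw [W_col_zero h1 h2 i j hj, mul_zero]
      apply Finset.sum_eq_zero
      intro l _
      have hni : ¬Function.Injective (fun t : Fin N => Fin.append j l (Fin.cast pf t)) := by
        intro hc
        exact hj (appendF_inj_parts j l pf hc).1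
      rw [show epsQ (fun a b => (q a b)⁻¹) (fun t => Fin.append j l (Fin.cast pf t)) = 0 by
        rw [epsQ, if_neg hni], mul_zero]
  · rw [W_row_zero h1 h2 i j hi, mul_zero]
    apply Finset.sum_eq_zero
    intro l _
    have hni : ¬Function.Injective (fun t : Fin N => Fin.append i l (Fin.cast pf t)) := by
      intro hc
      exact hi (appendF_inj_parts i l pf hc).1
    rw [show epsQ q (fun t => Fin.append i l (Fin.cast pf t)) = 0 by
      rw [epsQ, if_neg hni], zero_mul]
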